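/- arXiv:0903.5269 — 4 statements merged into one kernel-verified Lean document; each statement's English description precedes it below -/
import Mathlib

section
/- Let R ∈ 𝔯(V) be such that R* ∈ 𝔯(V) as well. Then: (1) π₈(R) = 0 and π₈(R*) = 0; (2) Ric(R)(y,z) − Ric(R)(z,y) = Ric*(R)(z,y) − Ric*(R)(y,z) for all y, z ∈ V; in particular Ric(R) is symmetric if and only if Ric*(R) is symmetric. -/
open scoped BigOperators
open Pointwise

namespace GCT

variable {V : Type*} [AddCommGroup V] [Module ℝ V]

/-- Linearity of a real valued function of one vector variable. -/
def IsLin (f : V → ℝ) : Prop :=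
  (∀ x y : V, f (x + y) = f x + f y) ∧ (∀ (c : ℝ) (x : V), f (c • x) = c * f x)

/-- Bilinearity. -/
def IsBilin (h : V → V → ℝ) : Prop :=
  (∀ y, IsLin (fun x => h x y)) ∧ (∀ x, IsLin (fun y => h x y))

/-- 4-linearity. -/
def IsMulti4 (F : V → V → V → V → ℝ) : Prop :=
  (∀ y z w, IsLin (fun x => F x y z w)) ∧ (∀ x z w, IsLin (fun y => F x y z w)) ∧
    (∀ x y w, IsLin (fun z => F x y z w)) ∧ (∀ x y z, IsLin (fun w => F x y z w))

/-- The space 𝔯(V) of generalized curvature tensors. -/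
def rSet (V : Type*) [AddCommGroup V] [Module ℝ V] : Set (V → V → V → V → ℝ) :=
  {F | IsMulti4 F ∧ (∀ x y z w, F x y z w = - F y x z w) ∧
    (∀ x y z w, F x y z w + F y z x w + F z x y w = 0)}

/-- The space 𝔞(V) of algebraic curvature tensors. -/
def aSet (V : Type*) [AddCommGroup V] [Module ℝ V] : Set (V → V → V → V → ℝ) :=
  {F | F ∈ rSet V ∧ ∀ x y z w, F x y z w = - F x y w z}

/-- The space 𝔰(V). -/
def sSet (V : Type*) [AddCommGroup V] [Module ℝ V] : Set (V → V → V → V → ℝ) :=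
  {F | F ∈ rSet V ∧ ∀ x y z w, F x y z w = F x y w z}

/-- The conjugate tensor R*. -/
def conj (F : V → V → V → V → ℝ) : V → V → V → V → ℝ := fun x y z w => - F x y w z

/-- The product h·k of two bilinear forms. -/
def prodB (h k : V → V → ℝ) : V → V → V → V → ℝ := fun x y z w => h x y * k z w

/-- The wedge product h ∧_t k of two bilinear forms. -/
def wedge (t : ℝ) (h k : V → V → ℝ) : V → V → V → V → ℝ :=
  fun x y z w => h x z * k y w - h y z * k x w - t * (h x w * k y z - h y w * k x z)

/-- Antisymmetric part Λh. -/
noncomputable def lamB (h : V → V → ℝ) : V → V → ℝ := fun x y => (h x y - h y x) / 2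

/-- Symmetric part Sh. -/
noncomputable def symB (h : V → V → ℝ) : V → V → ℝ := fun x y => (h x y + h y x) / 2

/-- The idempotent ψ. -/
noncomputable def psi (F : V → V → V → V → ℝ) : V → V → V → V → ℝ :=
  fun x y z w => (F x y z w + F y x w z + F z w x y + F w z y x) / 4

/-- The idempotent μ. -/
noncomputable def mu (F : V → V → V → V → ℝ) : V → V → V → V → ℝ :=
  fun x y z w =>
    (3 * F x y z w + 3 * F x y w z + F x w z y + F x z w y + F w y z x + F z y w x) / 8

/-- A linear equivalence is a g-isometry. -/
def IsIsometry (g : V → V → ℝ) (φ : V ≃ₗ[ℝ] V) : Prop := ∀ x y, g (φ x) (φ y) = g x y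

/-- Pull back of a 4-tensor along a linear equivalence (the natural action). -/
def pullT (φ : V ≃ₗ[ℝ] V) (F : V → V → V → V → ℝ) : V → V → V → V → ℝ :=
  fun x y z w => F (φ x) (φ y) (φ z) (φ w)

/-- Invariance of a set of 4-tensors under the orthogonal group O(V,g). -/
def OInv (g : V → V → ℝ) (S : Set (V → V → V → V → ℝ)) : Prop :=
  ∀ φ : V ≃ₗ[ℝ] V, IsIsometry g φ → ∀ F ∈ S, pullT φ F ∈ S

/-- Irreducibility of a subspace of 4-tensors as an O(V,g)-module:
there is no proper nonzero invariant subspace. -/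
def OIrred (g : V → V → ℝ) (W : Set (V → V → V → V → ℝ)) : Prop :=
  ∀ U : Submodule ℝ (V → V → V → V → ℝ), (U : Set (V → V → V → V → ℝ)) ⊆ W →
    (∀ φ : V ≃ₗ[ℝ] V, IsIsometry g φ → ∀ F ∈ U, pullT φ F ∈ U) →
    (U : Set (V → V → V → V → ℝ)) = {0} ∨ (U : Set (V → V → V → V → ℝ)) = W

/-- Isomorphism of two invariant subspaces as O(V,g)-modules. -/
def OEquivMod (g : V → V → ℝ) (S T : Set (V → V → V → V → ℝ)) : Prop :=
  ∃ e : (V → V → V → V → ℝ) →ₗ[ℝ] (V → V → V → V → ℝ),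
    Set.BijOn e S T ∧
      ∀ φ : V ≃ₗ[ℝ] V, IsIsometry g φ → ∀ F ∈ S, e (pullT φ F) = pullT φ (e F)

variable (n : ℕ) (b : Module.Basis (Fin n) ℝ V) (g : V → V → ℝ)

/-- Inverse metric components g^{ij}. -/
noncomputable def ginv : Matrix (Fin n) (Fin n) ℝ :=
  (Matrix.of fun i j => g (b i) (b j))⁻¹

/-- Ric(R)(x,y) := Σ g^{ij} R(e_i,x,y,e_j). -/
noncomputable def Ric (F : V → V → V → V → ℝ) : V → V → ℝ :=
  fun x y => ∑ i, ∑ j, ginv n b g i j * F (b i) x y (b j)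

/-- Ric*(R)(x,y) := Σ g^{ij} R(x,e_i,e_j,y). -/
noncomputable def RicS (F : V → V → V → V → ℝ) : V → V → ℝ :=
  fun x y => ∑ i, ∑ j, ginv n b g i j * F x (b i) (b j) y

/-- The generalized scalar curvature τ(R). -/
noncomputable def tau (F : V → V → V → V → ℝ) : ℝ :=
  ∑ i, ∑ j, ∑ k, ∑ l, ginv n b g i l * ginv n b g j k * F (b i) (b j) (b k) (b l)

/-- The g-trace of a bilinear form. -/
noncomputable def trg (h : V → V → ℝ) : ℝ := ∑ i, ∑ j, ginv n b g i j * h (b i) (b j)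

/-- The scalar product on 4-tensors given by full contraction with g. -/
noncomputable def inner4 (F T : V → V → V → V → ℝ) : ℝ :=
  ∑ i, ∑ j, ∑ k, ∑ l, ∑ i', ∑ j', ∑ k', ∑ l',
    ginv n b g i i' * ginv n b g j j' * ginv n b g k k' * ginv n b g l l' *
      F (b i) (b j) (b k) (b l) * T (b i') (b j') (b k') (b l')

/-- W-projection π₁. -/
noncomputable def pi1 (F : V → V → V → V → ℝ) : V → V → V → V → ℝ :=
  (-(tau n b g F) / ((n : ℝ) * ((n : ℝ) - 1))) • wedge 0 g g

/-- W-projection π₂. -/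
noncomputable def pi2 (F : V → V → V → V → ℝ) : V → V → V → V → ℝ :=
  ((1 : ℝ) / ((n : ℝ) - 1)) • wedge 0 (((tau n b g F) / (n : ℝ)) • g - symB (Ric n b g F)) g

/-- W-projection π₃. -/
noncomputable def pi3 (F : V → V → V → V → ℝ) : V → V → V → V → ℝ :=
  ((-1 : ℝ) / ((n : ℝ) + 1)) •
    ((2 : ℝ) • prodB (lamB (Ric n b g F)) g + wedge 0 (lamB (Ric n b g F)) g)

/-- W-projection π₄. -/
noncomputable def pi4 (F : V → V → V → V → ℝ) : V → V → V → V → ℝ :=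
  ((-1 : ℝ) / ((n : ℝ) ^ 2 - 4)) •
      ((2 : ℝ) • prodB (lamB (RicS n b g F)) g + wedge ((n : ℝ) + 1) (lamB (RicS n b g F)) g)
    - ((3 : ℝ) / (((n : ℝ) ^ 2 - 4) * ((n : ℝ) + 1))) •
      ((2 : ℝ) • prodB (lamB (Ric n b g F)) g + wedge ((n : ℝ) + 1) (lamB (Ric n b g F)) g)

/-- W-projection π₅. -/
noncomputable def pi5 (F : V → V → V → V → ℝ) : V → V → V → V → ℝ :=
  ((1 : ℝ) / (((n : ℝ) - 1) * ((n : ℝ) - 2))) •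
    ((tau n b g F) • wedge 0 g g -
      ((1 : ℝ) / (n : ℝ)) •
        wedge ((n : ℝ) - 1) (symB (Ric n b g F + ((n : ℝ) - 1) • RicS n b g F)) g)

/-- W-projection π₆. -/
noncomputable def pi6 (F : V → V → V → V → ℝ) : V → V → V → V → ℝ :=
  psi F + ((1 : ℝ) / (2 * ((n : ℝ) - 2))) • wedge 1 (symB (Ric n b g F + RicS n b g F)) g
    - ((tau n b g F) / (((n : ℝ) - 1) * ((n : ℝ) - 2))) • wedge 0 g g

/-- W-projection π₇. -/
noncomputable def pi7 (F : V → V → V → V → ℝ) : V → V → V → V → ℝ :=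
  mu F + ((1 : ℝ) / (2 * (n : ℝ))) • wedge (-1) (symB (Ric n b g F - RicS n b g F)) g
    + ((1 : ℝ) / (2 * ((n : ℝ) + 2))) • prodB (lamB ((3 : ℝ) • Ric n b g F - RicS n b g F)) g
    + ((1 : ℝ) / (4 * ((n : ℝ) + 2))) • wedge (-1) (lamB ((3 : ℝ) • Ric n b g F - RicS n b g F)) g

/-- W-projection π₈. -/
noncomputable def pi8 (F : V → V → V → V → ℝ) : V → V → V → V → ℝ :=
  F - psi F - mu F
    + ((1 : ℝ) / (2 * ((n : ℝ) - 2))) • prodB (lamB (Ric n b g F + RicS n b g F)) g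
    + ((1 : ℝ) / (4 * ((n : ℝ) - 2))) • wedge 3 (lamB (Ric n b g F + RicS n b g F)) g

/-- A-projection α₁. -/
noncomputable def al1 (F : V → V → V → V → ℝ) : V → V → V → V → ℝ :=
  (-(tau n b g F) / ((n : ℝ) * ((n : ℝ) - 1))) • wedge 0 g g

/-- A-projection α₂. -/
noncomputable def al2 (F : V → V → V → V → ℝ) : V → V → V → V → ℝ :=
  ((-1 : ℝ) / (2 * ((n : ℝ) - 2))) • wedge 1 (symB (Ric n b g F + RicS n b g F)) g
    + ((2 * tau n b g F) / ((n : ℝ) * ((n : ℝ) - 2))) • wedge 0 g g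

/-- A-projection α₃. -/
noncomputable def al3 (F : V → V → V → V → ℝ) : V → V → V → V → ℝ :=
  ((-1 : ℝ) / (2 * (n : ℝ))) • wedge (-1) (symB (Ric n b g F - RicS n b g F)) g

/-- A-projection α₄. -/
noncomputable def al4 (F : V → V → V → V → ℝ) : V → V → V → V → ℝ :=
  ((-1 : ℝ) / (4 * ((n : ℝ) + 2))) •
    ((2 : ℝ) • prodB (lamB ((3 : ℝ) • Ric n b g F - RicS n b g F)) g
      + wedge (-1) (lamB ((3 : ℝ) • Ric n b g F - RicS n b g F)) g)

/-- A-projection α₅. -/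
noncomputable def al5 (F : V → V → V → V → ℝ) : V → V → V → V → ℝ :=
  ((-1 : ℝ) / (4 * ((n : ℝ) - 2))) •
    ((2 : ℝ) • prodB (lamB (Ric n b g F + RicS n b g F)) g
      + wedge 3 (lamB (Ric n b g F + RicS n b g F)) g)

/-- A-projection α₆. -/
noncomputable def al6 (F : V → V → V → V → ℝ) : V → V → V → V → ℝ :=
  psi F - al1 n b g F - al2 n b g F

/-- A-projection α₇. -/
noncomputable def al7 (F : V → V → V → V → ℝ) : V → V → V → V → ℝ :=
  mu F - al3 n b g F - al4 n b g F

/-- A-projection α₈. -/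
noncomputable def al8 (F : V → V → V → V → ℝ) : V → V → V → V → ℝ :=
  F - mu F - psi F - al5 n b g F

/-- Curvature tensors of constant curvature type. -/
noncomputable def uSet : Set (V → V → V → V → ℝ) :=
  {F | ∃ c : ℝ, ∀ x y z w, F x y z w = c * (g x w * g y z - g x z * g y w)}

/-- Ricci traceless algebraic curvature tensors built from a traceless symmetric form. -/
noncomputable def zSet : Set (V → V → V → V → ℝ) :=
  {F | ∃ Xi : V → V → ℝ, IsBilin Xi ∧ (∀ x y, Xi x y = Xi y x) ∧ trg n b g Xi = 0 ∧
    ∀ x y z w, F x y z w = Xi x w * g y z + g x w * Xi y z - Xi x z * g y w - g x z * Xi y w}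

/-- Weyl type (Ricci flat algebraic) curvature tensors. -/
noncomputable def wSet : Set (V → V → V → V → ℝ) :=
  {F | F ∈ aSet V ∧ Ric n b g F = fun _ _ => 0}

/-- The projective curvature tensor p(R). -/
noncomputable def pProj (F : V → V → V → V → ℝ) : V → V → V → V → ℝ :=
  F - pi1 n b g F - pi2 n b g F - pi3 n b g F

/-- Pointwise identity: a tensor with both Bianchi identities equals ψ + μ of itself. -/
lemma ptwise (F : V → V → V → V → ℝ)
    (ha : ∀ x y z w, F x y z w = - F y x z w)
    (hB1 : ∀ x y z w, F x y z w + F y z x w + F z x y w = 0)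
    (hB2 : ∀ x y z w, F x y w z + F y z w x + F z x w y = 0) :
    ∀ x y z w, F x y z w = psi F x y z w + mu F x y z w := by
  intro x y z w
  simp only [psi, mu]
  linear_combination (3/8 : ℝ) * ha x y z w - (1/4 : ℝ) * hB2 x y z w
    - (1/8 : ℝ) * ha x y w z + (1/4 : ℝ) * ha x z y w - (1/8 : ℝ) * hB2 x z y w
    + (1/4 : ℝ) * ha x z w y - (1/4 : ℝ) * hB1 x z w y - (1/4 : ℝ) * hB2 x z w y
    + (1/4 : ℝ) * ha x w y z - (3/8 : ℝ) * hB2 x w y z + (1/4 : ℝ) * ha x w z y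
    - (1/4 : ℝ) * hB2 x w z y + (1/4 : ℝ) * hB1 y z w x

lemma ginv_symm (hgs : ∀ x y, g x y = g y x) (i j : Fin n) :
    ginv n b g i j = ginv n b g j i := by
  have hAs : Matrix.transpose (Matrix.of fun i j => g (b i) (b j))
      = Matrix.of fun i j => g (b i) (b j) := by
    ext i j
    simp only [Matrix.transpose_apply, Matrix.of_apply]
    exact hgs (b j) (b i)
  have h1 : ginv n b g i j
      = Matrix.transpose ((Matrix.of fun i j => g (b i) (b j))⁻¹) j i := rfl
  rw [h1, Matrix.transpose_nonsing_inv, hAs]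
  rfl

lemma sum_swap_ginv (hgs : ∀ x y, g x y = g y x) (G : Fin n → Fin n → ℝ) :
    (∑ i, ∑ j, ginv n b g i j * G i j) = ∑ i, ∑ j, ginv n b g i j * G j i := by
  rw [Finset.sum_comm]
  exact Finset.sum_congr rfl fun x _ => Finset.sum_congr rfl fun y _ => by
    rw [ginv_symm n b g hgs y x]

/-- Contracted Bianchi identity: the (3,4)-contraction equals the antisymmetric part
of the Ricci tensor. -/
lemma sumE (hgs : ∀ x y, g x y = g y x) (F : V → V → V → V → ℝ)
    (ha : ∀ x y z w, F x y z w = - F y x z w)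
    (hB1 : ∀ x y z w, F x y z w + F y z x w + F z x y w = 0)
    (hB2 : ∀ x y z w, F x y w z + F y z w x + F z x w y = 0) :
    ∀ y z, (∑ i, ∑ j, ginv n b g i j * F y z (b i) (b j))
      = Ric n b g F z y - Ric n b g F y z := by
  have hD : ∀ y w, (∑ i, ∑ j, ginv n b g i j * F y (b i) w (b j))
      = - Ric n b g F y w := by
    intro y w
    have h0 : ∑ i, ∑ j, ginv n b g i j *
        (F (b i) y w (b j) + F y (b j) w (b i) + F (b j) (b i) w y) = 0 :=
      Finset.sum_eq_zero fun i _ => Finset.sum_eq_zero fun j _ => by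
        rw [hB2 (b i) y (b j) w, mul_zero]
    simp only [mul_add, Finset.sum_add_distrib] at h0
    have h2 : (∑ i, ∑ j, ginv n b g i j * F y (b j) w (b i))
        = ∑ i, ∑ j, ginv n b g i j * F y (b i) w (b j) :=
      (sum_swap_ginv n b g hgs (fun i j => F y (b i) w (b j))).symm
    have h3 : (∑ i, ∑ j, ginv n b g i j * F (b j) (b i) w y) = 0 := by
      have hh := sum_swap_ginv n b g hgs (fun i j => F (b i) (b j) w y)
      have hneg : (∑ i, ∑ j, ginv n b g i j * F (b j) (b i) w y)
          = - ∑ i, ∑ j, ginv n b g i j * F (b i) (b j) w y := by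
        rw [← Finset.sum_neg_distrib]
        refine Finset.sum_congr rfl fun i _ => ?_
        rw [← Finset.sum_neg_distrib]
        refine Finset.sum_congr rfl fun j _ => ?_
        rw [ha (b j) (b i) w y]
        ring
      linarith
    simp only [Ric]
    linarith
  intro y z
  have h0 : ∑ i, ∑ j, ginv n b g i j *
      (F (b i) y z (b j) + F y z (b i) (b j) + F z (b i) y (b j)) = 0 :=
    Finset.sum_eq_zero fun i _ => Finset.sum_eq_zero fun j _ => by
      rw [hB1 (b i) y z (b j), mul_zero]
  simp only [mul_add, Finset.sum_add_distrib] at h0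
  have h3 := hD z y
  simp only [Ric] at h0 h3 ⊢
  linarith

theorem stmt4 {V : Type*} [AddCommGroup V] [Module ℝ V]
    (n : ℕ) (hn : 3 ≤ n) (b : Module.Basis (Fin n) ℝ V)
    (g : V → V → ℝ) (hgb : IsBilin g) (hgs : ∀ x y, g x y = g y x)
    (hgnd : ∀ x : V, (∀ y : V, g x y = 0) → x = 0) :
    ∀ F ∈ rSet V, conj F ∈ rSet V →
      pi8 n b g F = 0 ∧ pi8 n b g (conj F) = 0 ∧
      (∀ y z, Ric n b g F y z - Ric n b g F z y = RicS n b g F z y - RicS n b g F y z) ∧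
      ((∀ y z, Ric n b g F y z = Ric n b g F z y) ↔
        (∀ y z, RicS n b g F y z = RicS n b g F z y)) := by
  intro F hF hcF
  obtain ⟨-, haF, hB1F⟩ := hF
  obtain ⟨-, -, hB1c⟩ := hcF
  have hB2F : ∀ x y z w, F x y w z + F y z w x + F z x w y = 0 := by
    intro x y z w
    have h := hB1c x y z w
    simp only [conj] at h
    linarith
  have haC : ∀ x y z w, conj F x y z w = - conj F y x z w := by
    intro x y z w
    simp only [conj]
    linarith [haF x y w z]
  have hB2C : ∀ x y z w, conj F x y w z + conj F y z w x + conj F z x w y = 0 := by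
    intro x y z w
    simp only [conj]
    linarith [hB1F x y z w]
  -- contracted identities
  have hEF := sumE n b g hgs F haF hB1F hB2F
  have hEC := sumE n b g hgs (conj F) haC hB1c hB2C
  have ric_conj : ∀ x y, Ric n b g (conj F) x y = RicS n b g F x y := by
    intro x y
    simp only [Ric, RicS, conj]
    refine Finset.sum_congr rfl fun i _ => Finset.sum_congr rfl fun j _ => ?_
    rw [haF (b i) x (b j) y]
    ring
  have ricS_conj : ∀ x y, RicS n b g (conj F) x y = Ric n b g F x y := by
    intro x y
    simp only [Ric, RicS, conj]
    refine Finset.sum_congr rfl fun i _ => Finset.sum_congr rfl fun j _ => ?_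
    rw [haF (b i) x y (b j)]
  have econj : ∀ y z, (∑ i, ∑ j, ginv n b g i j * conj F y z (b i) (b j))
      = - ∑ i, ∑ j, ginv n b g i j * F y z (b i) (b j) := by
    intro y z
    have hh := sum_swap_ginv n b g hgs (fun i j => - F y z (b i) (b j))
    have h2 : (∑ i, ∑ j, ginv n b g i j * - F y z (b i) (b j))
        = - ∑ i, ∑ j, ginv n b g i j * F y z (b i) (b j) := by
      simp [mul_neg, Finset.sum_neg_distrib]
    simp only [conj]
    rw [← hh, h2]
  have hric : ∀ y z, Ric n b g F y z - Ric n b g F z y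
      = RicS n b g F z y - RicS n b g F y z := by
    intro y z
    have h1 := hEF y z
    have h2 := hEC y z
    rw [econj y z, ric_conj, ric_conj] at h2
    linarith
  -- symmetry of Ric + RicS kills the lamB terms
  have hlam : lamB (Ric n b g F + RicS n b g F) = fun _ _ => (0 : ℝ) := by
    funext x y
    simp only [lamB, Pi.add_apply]
    have := hric x y
    linarith
  have hlamC : lamB (Ric n b g (conj F) + RicS n b g (conj F)) = fun _ _ => (0 : ℝ) := by
    funext x y
    simp only [lamB, Pi.add_apply, ric_conj, ricS_conj]
    have := hric x y
    linarith
  have hkeyF := ptwise F haF hB1F hB2F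
  have hkeyC := ptwise (conj F) haC hB1c hB2C
  refine ⟨?_, ?_, hric, ?_⟩
  · funext x y z w
    simp only [pi8, hlam, Pi.add_apply, Pi.sub_apply, Pi.smul_apply, smul_eq_mul,
      prodB, wedge, Pi.zero_apply, zero_mul, mul_zero, sub_zero, add_zero]
    linarith [hkeyF x y z w]
  · funext x y z w
    simp only [pi8, hlamC, Pi.add_apply, Pi.sub_apply, Pi.smul_apply, smul_eq_mul,
      prodB, wedge, Pi.zero_apply, zero_mul, mul_zero, sub_zero, add_zero]
    linarith [hkeyC x y z w]
  · constructor
    · intro h y z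
      have := hric y z
      have h2 := h y z
      linarith
    · intro h y z
      have := hric y z
      have h2 := h y z
      linarith

end GCT
end

section
/- Let R ∈ 𝔯(V) be such that R* ∈ 𝔯(V) as well. Then: (1) R is equiaffine if and only if R* is equiaffine, i.e., Ric(R) is symmetric if and only if Ric(R*) is symmetric; (2) if moreover Ric(R) is symmetric, then π₃(R) = 0, π₄(R) = 0 and π₈(R) = 0, so that R = π₁(R) + (π₂(R) + π₅(R)) + (π₆(R) + π₇(R)). -/
open scoped BigOperators
open Pointwise

namespace GCT

variable {V : Type*} [AddCommGroup V] [Module ℝ V]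

variable (n : ℕ) (b : Module.Basis (Fin n) ℝ V) (g : V → V → ℝ)

theorem stmt5 {V : Type*} [AddCommGroup V] [Module ℝ V]
    (n : ℕ) (hn : 3 ≤ n) (b : Module.Basis (Fin n) ℝ V)
    (g : V → V → ℝ) (hgb : IsBilin g) (hgs : ∀ x y, g x y = g y x)
    (hgnd : ∀ x : V, (∀ y : V, g x y = 0) → x = 0) :
    ∀ F ∈ rSet V, conj F ∈ rSet V →
      ((∀ x y, Ric n b g F x y = Ric n b g F y x) ↔
        (∀ x y, Ric n b g (conj F) x y = Ric n b g (conj F) y x)) ∧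
      ((∀ x y, Ric n b g F x y = Ric n b g F y x) →
        pi3 n b g F = 0 ∧ pi4 n b g F = 0 ∧ pi8 n b g F = 0 ∧
        F = pi1 n b g F + (pi2 n b g F + pi5 n b g F) + (pi6 n b g F + pi7 n b g F)) := by
  intro F hF hFc
  simp only [rSet, Set.mem_setOf_eq] at hF hFc
  obtain ⟨hFm, hFa, hFb⟩ := hF
  obtain ⟨hFcm, hFca, hFcb⟩ := hFc
  have hFb' : ∀ x y z w : V, F x y w z + F y z w x + F z x w y = 0 := by
    intro x y z w
    have h := hFcb x y z w
    simp only [conj] at h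
    linarith
  -- symmetry of the inverse metric
  have hginv : ∀ i j, ginv n b g i j = ginv n b g j i := by
    intro i j
    have hsymM : Matrix.transpose (Matrix.of fun i j => g (b i) (b j))
        = Matrix.of fun i j => g (b i) (b j) := by
      ext a c
      simp only [Matrix.transpose_apply, Matrix.of_apply]
      exact hgs (b c) (b a)
    have h2 : Matrix.transpose ((Matrix.of fun i j => g (b i) (b j))⁻¹)
        = (Matrix.of fun i j => g (b i) (b j))⁻¹ := by
      rw [Matrix.transpose_nonsing_inv, hsymM]
    show (Matrix.of fun i j => g (b i) (b j))⁻¹ i j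
        = (Matrix.of fun i j => g (b i) (b j))⁻¹ j i
    conv_lhs => rw [← h2]
    simp [Matrix.transpose_apply]
  have hswap : ∀ H : Fin n → Fin n → ℝ,
      (∑ i, ∑ j, ginv n b g i j * H i j) = ∑ i, ∑ j, ginv n b g i j * H j i := by
    intro H
    rw [Finset.sum_comm]
    refine Finset.sum_congr rfl (fun i _ => Finset.sum_congr rfl (fun j _ => ?_))
    rw [hginv j i]
  have hzero : ∀ (T : V → V → V → V → ℝ), (∀ x y z w, T x y z w = -T y x z w) →
      ∀ x y : V, (∑ i, ∑ j, ginv n b g i j * T (b j) (b i) x y) = 0 := by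
    intro T hTa x y
    have h1 : (∑ i, ∑ j, ginv n b g i j * T (b j) (b i) x y)
        = ∑ i, ∑ j, ginv n b g i j * T (b i) (b j) x y := hswap _
    have h2 : (∑ i, ∑ j, ginv n b g i j * T (b i) (b j) x y)
        = ∑ i, ∑ j, -(ginv n b g i j * T (b j) (b i) x y) :=
      Finset.sum_congr rfl fun i _ => Finset.sum_congr rfl fun j _ => by
        rw [hTa (b i) (b j)]; ring
    have h3 : (∑ i, ∑ j, -(ginv n b g i j * T (b j) (b i) x y))
        = -∑ i, ∑ j, ginv n b g i j * T (b j) (b i) x y := by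
      simp [Finset.sum_neg_distrib]
    linarith [h1.trans (h2.trans h3)]
  have hric_conj : ∀ (T : V → V → V → V → ℝ), (∀ x y z w, T x y z w = -T y x z w) →
      (∀ x y z w, T x y z w + T y z x w + T z x y w = 0) →
      ∀ x y : V, Ric n b g (conj T) x y = RicS n b g T x y := by
    intro T hTa hTb x y
    have expand : Ric n b g (conj T) x y
        = (∑ i, ∑ j, ginv n b g i j * T x (b j) (b i) y)
          + ∑ i, ∑ j, ginv n b g i j * T (b j) (b i) x y := by
      show (∑ i, ∑ j, ginv n b g i j * conj T (b i) x y (b j)) = _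
      rw [← Finset.sum_add_distrib]
      refine Finset.sum_congr rfl (fun i _ => ?_)
      rw [← Finset.sum_add_distrib]
      refine Finset.sum_congr rfl (fun j _ => ?_)
      have h := hTb (b i) x (b j) y
      simp only [conj]
      linear_combination (-(ginv n b g i j)) * h
    have hs1 : (∑ i, ∑ j, ginv n b g i j * T x (b j) (b i) y) = RicS n b g T x y := by
      show _ = ∑ i, ∑ j, ginv n b g i j * T x (b i) (b j) y
      exact hswap _
    rw [expand, hs1, hzero T hTa x y, add_zero]
  have Ediff : ∀ (T : V → V → V → V → ℝ), (∀ x y z w, T x y z w = -T y x z w) →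
      (∀ x y z w, T x y z w + T y z x w + T z x y w = 0) →
      ∀ x y : V, Ric n b g T x y - Ric n b g T y x
        + (∑ i, ∑ j, ginv n b g i j * T x y (b i) (b j)) = 0 := by
    intro T hTa hTb x y
    have merge : Ric n b g T x y - Ric n b g T y x
        + (∑ i, ∑ j, ginv n b g i j * T x y (b i) (b j))
        = ∑ i, ∑ j, ginv n b g i j
            * (T (b i) x y (b j) - T (b i) y x (b j) + T x y (b i) (b j)) := by
      show (∑ i, ∑ j, ginv n b g i j * T (b i) x y (b j))
          - (∑ i, ∑ j, ginv n b g i j * T (b i) y x (b j))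
          + (∑ i, ∑ j, ginv n b g i j * T x y (b i) (b j)) = _
      rw [← Finset.sum_sub_distrib, ← Finset.sum_add_distrib]
      refine Finset.sum_congr rfl (fun i _ => ?_)
      rw [← Finset.sum_sub_distrib, ← Finset.sum_add_distrib]
      refine Finset.sum_congr rfl (fun j _ => ?_)
      ring
    rw [merge]
    refine Finset.sum_eq_zero (fun i _ => Finset.sum_eq_zero (fun j _ => ?_))
    have h1 := hTb (b i) x y (b j)
    have h2 := hTa y (b i) x (b j)
    linear_combination ginv n b g i j * h1 - ginv n b g i j * h2
  have Econj : ∀ x y : V, (∑ i, ∑ j, ginv n b g i j * conj F x y (b i) (b j))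
      = -∑ i, ∑ j, ginv n b g i j * F x y (b i) (b j) := by
    intro x y
    have h1 : (∑ i, ∑ j, ginv n b g i j * conj F x y (b i) (b j))
        = ∑ i, ∑ j, ginv n b g i j * conj F x y (b j) (b i) := hswap _
    rw [h1]
    calc (∑ i, ∑ j, ginv n b g i j * conj F x y (b j) (b i))
        = ∑ i, ∑ j, -(ginv n b g i j * F x y (b i) (b j)) :=
          Finset.sum_congr rfl fun i _ => Finset.sum_congr rfl fun j _ => by
            simp only [conj]; ring
      _ = -∑ i, ∑ j, ginv n b g i j * F x y (b i) (b j) := by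
          simp [Finset.sum_neg_distrib]
  have hRicConjF : ∀ x y, Ric n b g (conj F) x y = RicS n b g F x y := hric_conj F hFa hFb
  have hlamrel : ∀ x y : V, RicS n b g F x y - RicS n b g F y x
      = -(Ric n b g F x y - Ric n b g F y x) := by
    intro x y
    have k1 := Ediff F hFa hFb x y
    have k2 := Ediff (conj F) hFca hFcb x y
    rw [hRicConjF x y, hRicConjF y x, Econj x y] at k2
    linarith
  constructor
  · constructor
    · intro hsym x y
      rw [hRicConjF x y, hRicConjF y x]
      have h1 := hlamrel x y
      have h2 := hsym x y
      linarith
    · intro hsymc x y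
      have h1 := hsymc x y
      rw [hRicConjF x y, hRicConjF y x] at h1
      have h2 := hlamrel x y
      linarith
  · intro hsym
    have hsymS : ∀ x y, RicS n b g F x y = RicS n b g F y x := by
      intro x y
      have h1 := hlamrel x y
      have h2 := hsym x y
      linarith
    have hpm : ∀ x y z w : V, F x y z w
        = (F x y z w + F y x w z + F z w x y + F w z y x) / 4
          + (3 * F x y z w + 3 * F x y w z + F x w z y + F x z w y + F w y z x
              + F z y w x) / 8 := by
      intro x y z w
      linear_combination (3/8 : ℝ) * (hFa x y z w) + (-1/4 : ℝ) * (hFb' x y z w)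
        + (-1/8 : ℝ) * (hFa x y w z) + (1/4 : ℝ) * (hFa x z y w)
        + (-1/8 : ℝ) * (hFb' x z y w) + (1/4 : ℝ) * (hFa x z w y)
        + (-1/4 : ℝ) * (hFb x z w y) + (-1/4 : ℝ) * (hFb' x z w y)
        + (1/4 : ℝ) * (hFa x w y z) + (-3/8 : ℝ) * (hFb' x w y z)
        + (1/4 : ℝ) * (hFa x w z y) + (-1/4 : ℝ) * (hFb' x w z y)
        + (1/4 : ℝ) * (hFb y z w x)
    have hlam0 : ∀ x y : V, lamB (Ric n b g F) x y = 0 := by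
      intro x y; simp [lamB, hsym x y]
    have hlamS0 : ∀ x y : V, lamB (RicS n b g F) x y = 0 := by
      intro x y; simp [lamB, hsymS x y]
    have hlamPlus : ∀ x y : V, lamB (Ric n b g F + RicS n b g F) x y = 0 := by
      intro x y; simp [lamB, Pi.add_apply, hsym x y, hsymS x y]
    have hpi3 : pi3 n b g F = 0 := by
      funext x y z w
      simp [pi3, prodB, wedge, hlam0]
    have hpi4 : pi4 n b g F = 0 := by
      funext x y z w
      simp [pi4, prodB, wedge, hlam0, hlamS0]
    have hpi8 : pi8 n b g F = 0 := by
      funext x y z w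
      simp [pi8, prodB, wedge, hlamPlus, psi, mu]
      linarith [hpm x y z w]
    refine ⟨hpi3, hpi4, hpi8, ?_⟩
    funext x y z w
    have hN : (3:ℝ) ≤ (n:ℝ) := by exact_mod_cast hn
    have hn0 : (n:ℝ) ≠ 0 := by intro h; rw [h] at hN; norm_num at hN
    have hn1 : (n:ℝ) - 1 ≠ 0 := by intro h; linarith
    have hn2 : (n:ℝ) - 2 ≠ 0 := by intro h; linarith
    have h1 : 1/((n:ℝ)-1) + 1/(((n:ℝ)-1)*((n:ℝ)-2)) * (1/(n:ℝ))
        - 1/(2*((n:ℝ)-2)) - 1/(2*(n:ℝ)) = 0 := by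
      field_simp
      ring
    have h2 : 1/(((n:ℝ)-1)*((n:ℝ)-2)) * (1/(n:ℝ)) * ((n:ℝ)-1)
        - 1/(2*((n:ℝ)-2)) + 1/(2*(n:ℝ)) = 0 := by
      field_simp
      ring
    have h3 : -(1/(((n:ℝ)-1)*((n:ℝ)-2)) * (1/(n:ℝ)) * ((n:ℝ)-1))
        + 1/(2*((n:ℝ)-2)) - 1/(2*(n:ℝ)) = 0 := by
      field_simp
      ring
    have h4 : 1/(((n:ℝ)-1)*((n:ℝ)-2)) * (1/(n:ℝ)) * ((n:ℝ)-1) * ((n:ℝ)-1)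
        - 1/(2*((n:ℝ)-2)) - 1/(2*(n:ℝ)) = 0 := by
      field_simp
      ring
    have h0 : 1/((n:ℝ)*((n:ℝ)-1)) - 1/((n:ℝ)-1) * (1/(n:ℝ)) = 0 := by
      field_simp
      ring
    simp only [pi1, pi2, pi5, pi6, pi7, Pi.add_apply, Pi.sub_apply, Pi.smul_apply,
      smul_eq_mul, wedge, prodB, symB, lamB, psi, mu]
    rw [hsym z x, hsym z y, hsym w x, hsym w y, hsym y x,
        hsymS z x, hsymS z y, hsymS w x, hsymS w y, hsymS y x]
    linear_combination hpm x y z w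
      + (Ric n b g F x z * g y w - Ric n b g F y z * g x w) * h1
      - (Ric n b g F x w * g y z - Ric n b g F y w * g x z) * h2
      - (RicS n b g F x z * g y w - RicS n b g F y z * g x w) * h3
      - (RicS n b g F x w * g y z - RicS n b g F y w * g x z) * h4
      + ((g y w * g x z - g x w * g y z) * tau n b g F) * h0

end GCT
end

section
/- Let R ∈ 𝔣(V,g) be such that R* ∈ 𝔣(V,g) as well (i.e., R, R* ∈ 𝔯(V) and both Ric(R), Ric(R*) are symmetric). Then, with Ric := Ric(R), Ric* := Ric*(R), τ := τ(R): (1) π₁(R) = (−τ/(n(n−1))) g∧g = π₁(R*); (2) π₂(R) = (1/(n−1))[(τ/n)g − Ric]∧g; (3) π₃(R) = 0 = π₃(R*); (4) π₄(R) = 0 = π₄(R*); (5) π₅(R) = (1/((n−1)(n−2)))[τ g∧g − (1/n)(Ric + (n−1)Ric*)∧_{n−1}g]; (6) π₆(R) = ψ(R) + (1/(2(n−2)))(Ric + Ric*)∧₁g − (τ/((n−1)(n−2))) g∧g = π₆(R*); (7) π₇(R) = μ(R) + (1/(2n))(Ric − Ric*)∧_{−1}g = −π₇(R*); (8) π₈(R)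 = 0 = π₈(R*). -/
open scoped BigOperators
open Pointwise

namespace GCT

variable {V : Type*} [AddCommGroup V] [Module ℝ V]

variable (n : ℕ) (b : Module.Basis (Fin n) ℝ V) (g : V → V → ℝ)

/-! ### Auxiliary lemmas -/

lemma sum4_congr {f f' : Fin n → Fin n → Fin n → Fin n → ℝ}
    (h : ∀ i j k l, f i j k l = f' i j k l) :
    (∑ i, ∑ j, ∑ k, ∑ l, f i j k l) = ∑ i, ∑ j, ∑ k, ∑ l, f' i j k l := by
  simp only [h]

lemma sum4_swap12 (f : Fin n → Fin n → Fin n → Fin n → ℝ) :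
    (∑ i, ∑ j, ∑ k, ∑ l, f i j k l) = ∑ i, ∑ j, ∑ k, ∑ l, f j i k l :=
  Finset.sum_comm

lemma sum4_swap34 (f : Fin n → Fin n → Fin n → Fin n → ℝ) :
    (∑ i, ∑ j, ∑ k, ∑ l, f i j k l) = ∑ i, ∑ j, ∑ k, ∑ l, f i j l k :=
  Finset.sum_congr rfl fun _ _ => Finset.sum_congr rfl fun _ _ => Finset.sum_comm

lemma sum4_cyc (f : Fin n → Fin n → Fin n → Fin n → ℝ) :
    (∑ i, ∑ j, ∑ k, ∑ l, f i j k l) = ∑ i, ∑ j, ∑ k, ∑ l, f j k i l :=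
  calc (∑ i, ∑ j, ∑ k, ∑ l, f i j k l)
      = ∑ i, ∑ k, ∑ j, ∑ l, f i j k l := Finset.sum_congr rfl fun _ _ => Finset.sum_comm
    _ = ∑ k, ∑ i, ∑ j, ∑ l, f i j k l := Finset.sum_comm

lemma ricS_eq_ric_conj (F : V → V → V → V → ℝ)
    (hA : ∀ x y z w, F x y z w = - F y x z w) :
    RicS n b g F = Ric n b g (conj F) := by
  funext x y
  simp only [RicS, Ric, conj]
  refine Finset.sum_congr rfl fun i _ => Finset.sum_congr rfl fun j _ => ?_
  rw [hA x (b i) (b j) y]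

lemma ricS_conj_eq_ric (F : V → V → V → V → ℝ)
    (hA : ∀ x y z w, F x y z w = - F y x z w) :
    RicS n b g (conj F) = Ric n b g F := by
  funext x y
  simp only [RicS, Ric, conj]
  refine Finset.sum_congr rfl fun i _ => Finset.sum_congr rfl fun j _ => ?_
  rw [hA (b i) x y (b j)]

lemma tau_conj (hgs : ∀ x y, g x y = g y x) (F : V → V → V → V → ℝ)
    (hA : ∀ x y z w, F x y z w = - F y x z w)
    (hB : ∀ x y z w, F x y z w + F y z x w + F z x y w = 0) :
    tau n b g (conj F) = tau n b g F := by
  have hgv : ∀ i j, ginv n b g i j = ginv n b g j i := ginv_symm n b g hgs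
  have e1 : tau n b g F =
      (∑ i, ∑ j, ∑ k, ∑ l, ginv n b g i l * ginv n b g j k * -F (b j) (b k) (b i) (b l))
      + (∑ i, ∑ j, ∑ k, ∑ l, ginv n b g i l * ginv n b g j k * -F (b k) (b i) (b j) (b l)) := by
    simp only [tau]
    have h' : ∀ i j k l : Fin n,
        ginv n b g i l * ginv n b g j k * F (b i) (b j) (b k) (b l)
          = ginv n b g i l * ginv n b g j k * -F (b j) (b k) (b i) (b l)
            + ginv n b g i l * ginv n b g j k * -F (b k) (b i) (b j) (b l) := fun i j k l => by
      linear_combination (ginv n b g i l * ginv n b g j k) * hB (b i) (b j) (b k) (b l)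
    simp only [h']
    simp only [Finset.sum_add_distrib]
  have e2 : (∑ i, ∑ j, ∑ k, ∑ l,
      ginv n b g i l * ginv n b g j k * -F (b j) (b k) (b i) (b l)) = 0 := by
    have c1 : (∑ i, ∑ j, ∑ k, ∑ l, ginv n b g i l * ginv n b g j k * -F (b j) (b k) (b i) (b l))
        = ∑ i, ∑ j, ∑ k, ∑ l, ginv n b g j l * ginv n b g k i * -F (b k) (b i) (b j) (b l) :=
      sum4_cyc n _
    have c2 : (∑ i, ∑ j, ∑ k, ∑ l, ginv n b g j l * ginv n b g k i * -F (b k) (b i) (b j) (b l))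
        = ∑ i, ∑ j, ∑ k, ∑ l, ginv n b g k l * ginv n b g i j * -F (b i) (b j) (b k) (b l) :=
      sum4_cyc n _
    have c3 : (∑ i, ∑ j, ∑ k, ∑ l, ginv n b g k l * ginv n b g i j * -F (b i) (b j) (b k) (b l))
        = ∑ i, ∑ j, ∑ k, ∑ l, ginv n b g k l * ginv n b g j i * -F (b j) (b i) (b k) (b l) :=
      sum4_swap12 n _
    have c4 : ∀ i j k l : Fin n,
        ginv n b g k l * ginv n b g j i * -F (b j) (b i) (b k) (b l)
          = -(ginv n b g k l * ginv n b g i j * -F (b i) (b j) (b k) (b l)) := fun i j k l => by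
      rw [hgv j i, hA (b j) (b i) (b k) (b l)]; ring
    have c5a : (∑ i, ∑ j, ∑ k, ∑ l, ginv n b g k l * ginv n b g j i * -F (b j) (b i) (b k) (b l))
        = ∑ i, ∑ j, ∑ k, ∑ l,
            -(ginv n b g k l * ginv n b g i j * -F (b i) (b j) (b k) (b l)) :=
      sum4_congr n c4
    have c5 : (∑ i, ∑ j, ∑ k, ∑ l, ginv n b g k l * ginv n b g j i * -F (b j) (b i) (b k) (b l))
        = -(∑ i, ∑ j, ∑ k, ∑ l, ginv n b g k l * ginv n b g i j * -F (b i) (b j) (b k) (b l)) := by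
      rw [c5a]
      simp only [Finset.sum_neg_distrib]
    linarith [c1, c2, c3, c5]
  have d1 : (∑ i, ∑ j, ∑ k, ∑ l,
      ginv n b g i l * ginv n b g j k * -F (b k) (b i) (b j) (b l))
      = ∑ i, ∑ j, ∑ k, ∑ l, ginv n b g j l * ginv n b g k i * -F (b i) (b j) (b k) (b l) :=
    sum4_cyc n _
  have d2 : tau n b g (conj F)
      = ∑ i, ∑ j, ∑ k, ∑ l, ginv n b g i k * ginv n b g j l * -F (b i) (b j) (b k) (b l) := by
    simp only [tau, conj]
    exact sum4_swap34 n _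
  have d3 : ∀ i j k l : Fin n,
      ginv n b g j l * ginv n b g k i * -F (b i) (b j) (b k) (b l)
        = ginv n b g i k * ginv n b g j l * -F (b i) (b j) (b k) (b l) := fun i j k l => by
    rw [hgv k i]; ring
  have d4 : (∑ i, ∑ j, ∑ k, ∑ l, ginv n b g j l * ginv n b g k i * -F (b i) (b j) (b k) (b l))
      = ∑ i, ∑ j, ∑ k, ∑ l, ginv n b g i k * ginv n b g j l * -F (b i) (b j) (b k) (b l) := by
    simp only [d3]
  linarith [e1, e2, d1, d4, d2]

lemma symB_eq_self (h : V → V → ℝ) (hs : ∀ x y, h x y = h y x) : symB h = h := by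
  funext x y
  simp only [symB]
  rw [← hs x y]
  ring

lemma lamB_eq_zero (h : V → V → ℝ) (hs : ∀ x y, h x y = h y x) : lamB h = 0 := by
  funext x y
  simp only [lamB, Pi.zero_apply]
  rw [hs x y]
  ring

lemma prodB_zero_left : prodB (0 : V → V → ℝ) g = 0 := by
  funext x y z w
  simp [prodB]

lemma wedge_zero_left (t : ℝ) : wedge t (0 : V → V → ℝ) g = 0 := by
  funext x y z w
  simp [wedge]

lemma wedge_sub_swap (t : ℝ) (h k : V → V → ℝ) :
    wedge t (h - k) g = - wedge t (k - h) g := by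
  funext x y z w
  simp only [wedge, Pi.sub_apply, Pi.neg_apply]
  ring

lemma psi_conj_ptw (F : V → V → V → V → ℝ)
    (hA : ∀ x y z w, F x y z w = - F y x z w)
    (hB : ∀ x y z w, F x y z w + F y z x w + F z x y w = 0)
    (hBc : ∀ x y z w, F x y w z + F y z w x + F z x w y = 0) :
    psi (conj F) = psi F := by
  funext x y z w
  simp only [psi, conj]
  linear_combination (-1/4 : ℝ) * hA x y z w + (-1/4 : ℝ) * hA x y w z
    + (1/4 : ℝ) * hA x z y w + (1/4 : ℝ) * hA x z w y + (-1/4 : ℝ) * hB x z w y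
    + (-1/4 : ℝ) * hBc x z w y + (1/4 : ℝ) * hA x w y z + (1/4 : ℝ) * hA x w z y
    + (-1/4 : ℝ) * hB x w z y + (-1/4 : ℝ) * hBc x w z y

lemma mu_conj_ptw (F : V → V → V → V → ℝ)
    (hA : ∀ x y z w, F x y z w = - F y x z w)
    (hB : ∀ x y z w, F x y z w + F y z x w + F z x y w = 0)
    (hBc : ∀ x y z w, F x y w z + F y z w x + F z x w y = 0) :
    mu (conj F) = - mu F := by
  funext x y z w
  simp only [mu, conj, Pi.neg_apply]
  linear_combination (-1/8 : ℝ) * hB x z y w + (1/8 : ℝ) * hBc x z y w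
    + (-1/8 : ℝ) * hB x w y z + (1/8 : ℝ) * hBc x w y z

lemma decomp_ptw (F : V → V → V → V → ℝ)
    (hA : ∀ x y z w, F x y z w = - F y x z w)
    (hB : ∀ x y z w, F x y z w + F y z x w + F z x y w = 0)
    (hBc : ∀ x y z w, F x y w z + F y z w x + F z x w y = 0) :
    ∀ x y z w, F x y z w = psi F x y z w + mu F x y z w := by
  intro x y z w
  simp only [psi, mu]
  linear_combination (3/8 : ℝ) * hA x y z w + (-2/8 : ℝ) * hBc x y z w
    + (-1/8 : ℝ) * hA x y w z + (2/8 : ℝ) * hA x z y w + (-1/8 : ℝ) * hBc x z y w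
    + (2/8 : ℝ) * hA x z w y + (-2/8 : ℝ) * hB x z w y + (-2/8 : ℝ) * hBc x z w y
    + (2/8 : ℝ) * hA x w y z + (-3/8 : ℝ) * hBc x w y z + (2/8 : ℝ) * hA x w z y
    + (-2/8 : ℝ) * hBc x w z y + (2/8 : ℝ) * hB y z w x


theorem stmt6 {V : Type*} [AddCommGroup V] [Module ℝ V]
    (n : ℕ) (hn : 3 ≤ n) (b : Module.Basis (Fin n) ℝ V)
    (g : V → V → ℝ) (hgb : IsBilin g) (hgs : ∀ x y, g x y = g y x)
    (hgnd : ∀ x : V, (∀ y : V, g x y = 0) → x = 0) :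
    ∀ F ∈ rSet V, conj F ∈ rSet V →
      (∀ x y, Ric n b g F x y = Ric n b g F y x) →
      (∀ x y, Ric n b g (conj F) x y = Ric n b g (conj F) y x) →
      (pi1 n b g F = (-(tau n b g F) / ((n : ℝ) * ((n : ℝ) - 1))) • wedge 0 g g ∧
        pi1 n b g F = pi1 n b g (conj F)) ∧
      pi2 n b g F =
        ((1 : ℝ) / ((n : ℝ) - 1)) • wedge 0 (((tau n b g F) / (n : ℝ)) • g - Ric n b g F) g ∧
      (pi3 n b g F = 0 ∧ pi3 n b g (conj F) = 0) ∧
      (pi4 n b g F = 0 ∧ pi4 n b g (conj F) = 0) ∧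
      pi5 n b g F = ((1 : ℝ) / (((n : ℝ) - 1) * ((n : ℝ) - 2))) •
        ((tau n b g F) • wedge 0 g g -
          ((1 : ℝ) / (n : ℝ)) •
            wedge ((n : ℝ) - 1) (Ric n b g F + ((n : ℝ) - 1) • RicS n b g F) g) ∧
      (pi6 n b g F = psi F
          + ((1 : ℝ) / (2 * ((n : ℝ) - 2))) • wedge 1 (Ric n b g F + RicS n b g F) g
          - ((tau n b g F) / (((n : ℝ) - 1) * ((n : ℝ) - 2))) • wedge 0 g g ∧
        pi6 n b g F = pi6 n b g (conj F)) ∧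
      (pi7 n b g F = mu F
          + ((1 : ℝ) / (2 * (n : ℝ))) • wedge (-1) (Ric n b g F - RicS n b g F) g ∧
        pi7 n b g F = - pi7 n b g (conj F)) ∧
      (pi8 n b g F = 0 ∧ pi8 n b g (conj F) = 0) := by
  intro F hF hFc hRic hRicc
  obtain ⟨-, hA, hB⟩ := hF
  obtain ⟨-, hAc, hBc0⟩ := hFc
  have hBc : ∀ x y z w : V, F x y w z + F y z w x + F z x w y = 0 := fun x y z w => by
    have h := hBc0 x y z w
    simp only [conj] at h
    linarith
  have hBcc : ∀ x y z w : V,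
      (conj F) x y w z + (conj F) y z w x + (conj F) z x w y = 0 := fun x y z w => by
    simp only [conj]
    have h := hB x y z w
    linarith
  have htc : tau n b g (conj F) = tau n b g F := tau_conj n b g hgs F hA hB
  have L1 : RicS n b g F = Ric n b g (conj F) := ricS_eq_ric_conj n b g F hA
  have L2 : RicS n b g (conj F) = Ric n b g F := ricS_conj_eq_ric n b g F hA
  have hRS : ∀ x y, RicS n b g F x y = RicS n b g F y x := fun x y => by
    rw [L1]; exact hRicc x y
  have hRSc : ∀ x y, RicS n b g (conj F) x y = RicS n b g (conj F) y x := fun x y => by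
    rw [L2]; exact hRic x y
  -- symmetry of various combinations
  have hsum : ∀ x y, (Ric n b g F + ((n : ℝ) - 1) • RicS n b g F) x y
      = (Ric n b g F + ((n : ℝ) - 1) • RicS n b g F) y x := fun x y => by
    simp only [Pi.add_apply, Pi.smul_apply, smul_eq_mul]
    rw [hRic x y, hRS x y]
  have hsum2 : ∀ x y, (Ric n b g F + RicS n b g F) x y
      = (Ric n b g F + RicS n b g F) y x := fun x y => by
    simp only [Pi.add_apply]
    rw [hRic x y, hRS x y]
  have hsum2c : ∀ x y, (Ric n b g (conj F) + RicS n b g (conj F)) x y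
      = (Ric n b g (conj F) + RicS n b g (conj F)) y x := fun x y => by
    simp only [Pi.add_apply]
    rw [hRicc x y, hRSc x y]
  have hdiff : ∀ x y, (Ric n b g F - RicS n b g F) x y
      = (Ric n b g F - RicS n b g F) y x := fun x y => by
    simp only [Pi.sub_apply]
    rw [hRic x y, hRS x y]
  have hdiffc : ∀ x y, (Ric n b g (conj F) - RicS n b g (conj F)) x y
      = (Ric n b g (conj F) - RicS n b g (conj F)) y x := fun x y => by
    simp only [Pi.sub_apply]
    rw [hRicc x y, hRSc x y]
  have h3 : ∀ x y, ((3 : ℝ) • Ric n b g F - RicS n b g F) x y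
      = ((3 : ℝ) • Ric n b g F - RicS n b g F) y x := fun x y => by
    simp only [Pi.sub_apply, Pi.smul_apply, smul_eq_mul]
    rw [hRic x y, hRS x y]
  have h3c : ∀ x y, ((3 : ℝ) • Ric n b g (conj F) - RicS n b g (conj F)) x y
      = ((3 : ℝ) • Ric n b g (conj F) - RicS n b g (conj F)) y x := fun x y => by
    simp only [Pi.sub_apply, Pi.smul_apply, smul_eq_mul]
    rw [hRicc x y, hRSc x y]
  have h7A : pi7 n b g F = mu F
      + ((1 : ℝ) / (2 * (n : ℝ))) • wedge (-1) (Ric n b g F - RicS n b g F) g := by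
    simp only [pi7]
    rw [symB_eq_self _ hdiff, lamB_eq_zero _ h3]
    simp [prodB_zero_left, wedge_zero_left]
  have h7C : pi7 n b g (conj F) = mu (conj F)
      + ((1 : ℝ) / (2 * (n : ℝ))) •
        wedge (-1) (Ric n b g (conj F) - RicS n b g (conj F)) g := by
    simp only [pi7]
    rw [symB_eq_self _ hdiffc, lamB_eq_zero _ h3c]
    simp [prodB_zero_left, wedge_zero_left]
  refine ⟨⟨rfl, ?_⟩, ?_, ⟨?_, ?_⟩, ⟨?_, ?_⟩, ?_, ⟨?_, ?_⟩, ⟨?_, ?_⟩, ?_, ?_⟩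
  · -- pi1 F = pi1 (conj F)
    simp only [pi1, htc]
  · -- pi2
    simp only [pi2]
    rw [symB_eq_self _ hRic]
  · -- pi3 F = 0
    simp only [pi3]
    rw [lamB_eq_zero _ hRic]
    simp [prodB_zero_left, wedge_zero_left]
  · -- pi3 (conj F) = 0
    simp only [pi3]
    rw [lamB_eq_zero _ hRicc]
    simp [prodB_zero_left, wedge_zero_left]
  · -- pi4 F = 0
    simp only [pi4]
    rw [lamB_eq_zero _ hRS, lamB_eq_zero _ hRic]
    simp [prodB_zero_left, wedge_zero_left]
  · -- pi4 (conj F) = 0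
    simp only [pi4]
    rw [lamB_eq_zero _ hRSc, lamB_eq_zero _ hRicc]
    simp [prodB_zero_left, wedge_zero_left]
  · -- pi5
    simp only [pi5]
    rw [symB_eq_self _ hsum]
  · -- pi6 explicit form
    simp only [pi6]
    rw [symB_eq_self _ hsum2]
  · -- pi6 F = pi6 (conj F)
    simp only [pi6]
    rw [psi_conj_ptw F hA hB hBc, htc, L2, ← L1,
      add_comm (RicS n b g F) (Ric n b g F)]
  · -- pi7 explicit form
    exact h7A
  · -- pi7 F = - pi7 (conj F)
    rw [h7A, h7C, mu_conj_ptw F hA hB hBc, L2, ← L1,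
      wedge_sub_swap g (-1) (RicS n b g F) (Ric n b g F)]
    simp only [smul_neg, neg_add, neg_neg]
  · -- pi8 F = 0
    simp only [pi8]
    rw [lamB_eq_zero _ hsum2]
    have hd := decomp_ptw F hA hB hBc
    funext x y z w
    simp only [prodB_zero_left, wedge_zero_left, smul_zero, add_zero,
      Pi.sub_apply, Pi.zero_apply, Pi.add_apply, Pi.smul_apply, smul_eq_mul]
    have := hd x y z w
    linarith
  · -- pi8 (conj F) = 0
    simp only [pi8]
    rw [lamB_eq_zero _ hsum2c]
    have hd := decomp_ptw (conj F) hAc hBc0 hBcc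
    funext x y z w
    simp only [prodB_zero_left, wedge_zero_left, smul_zero, add_zero,
      Pi.sub_apply, Pi.zero_apply, Pi.add_apply, Pi.smul_apply, smul_eq_mul]
    have := hd x y z w
    linarith

end GCT
end

section
/- For every R ∈ 𝔯(V), writing Ric := Ric(R) and τ := τ(R): (1) Ric(π₁(R)) = (τ/n) g; (2) Ric(π₂(R)) = −(τ/n) g + S Ric; (3) Ric(π₃(R)) = Λ Ric; (4) Ric(π_j(R)) = 0 for j = 4, 5, 6, 7, 8; (5) the g-trace of Ric(π_j(R)) vanishes for j = 2, …, 8. -/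
open scoped BigOperators
open Pointwise

namespace GCT

variable {V : Type*} [AddCommGroup V] [Module ℝ V]

variable (n : ℕ) (b : Module.Basis (Fin n) ℝ V) (g : V → V → ℝ)

/-! ### Auxiliary lemmas -/

section AuxLin

variable {V : Type*} [AddCommGroup V] [Module ℝ V]

def IsLin.toLM {f : V → ℝ} (hf : IsLin f) : V →ₗ[ℝ] ℝ :=
  { toFun := f, map_add' := hf.1, map_smul' := hf.2 }

lemma IsLin.sum_smul {f : V → ℝ} (hf : IsLin f) {m : ℕ} (c : Fin m → ℝ) (v : Fin m → V) :
    f (∑ k, c k • v k) = ∑ k, c k * f (v k) := by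
  have h1 : f (∑ k, c k • v k) = hf.toLM (∑ k, c k • v k) := rfl
  rw [h1, _root_.map_sum]; simp [IsLin.toLM]

lemma isLin_dsum {m : ℕ} {f : Fin m → Fin m → V → ℝ} (h : ∀ i j, IsLin (f i j)) :
    IsLin (fun x => ∑ i, ∑ j, f i j x) := by
  constructor
  · intro x y; simp only [(h _ _).1, Finset.sum_add_distrib]
  · intro c x; simp only [(h _ _).2, Finset.mul_sum]

lemma isLin_const_mul (c : ℝ) {f : V → ℝ} (hf : IsLin f) : IsLin (fun x => c * f x) := by
  constructor
  · intro x y; show c * f (x + y) = _; rw [hf.1]; ring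
  · intro d x; show c * f (d • x) = _; rw [hf.2]; ring

lemma bilin_addPi {h k : V → V → ℝ} (hh : IsBilin h) (hk : IsBilin k) : IsBilin (h + k) := by
  constructor
  · intro y; constructor
    · intro u v
      have e1 : h (u + v) y = h u y + h v y := (hh.1 y).1 u v
      have e2 : k (u + v) y = k u y + k v y := (hk.1 y).1 u v
      show h (u + v) y + k (u + v) y = (h u y + k u y) + (h v y + k v y)
      rw [e1, e2]; ring
    · intro c u
      have e1 : h (c • u) y = c * h u y := (hh.1 y).2 c u
      have e2 : k (c • u) y = c * k u y := (hk.1 y).2 c u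
      show h (c • u) y + k (c • u) y = c * (h u y + k u y)
      rw [e1, e2]; ring
  · intro x; constructor
    · intro u v
      have e1 : h x (u + v) = h x u + h x v := (hh.2 x).1 u v
      have e2 : k x (u + v) = k x u + k x v := (hk.2 x).1 u v
      show h x (u + v) + k x (u + v) = (h x u + k x u) + (h x v + k x v)
      rw [e1, e2]; ring
    · intro c u
      have e1 : h x (c • u) = c * h x u := (hh.2 x).2 c u
      have e2 : k x (c • u) = c * k x u := (hk.2 x).2 c u
      show h x (c • u) + k x (c • u) = c * (h x u + k x u)
      rw [e1, e2]; ring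

lemma bilin_smulPi (c : ℝ) {h : V → V → ℝ} (hh : IsBilin h) : IsBilin (c • h) := by
  constructor
  · intro y; constructor
    · intro u v
      have e1 : h (u + v) y = h u y + h v y := (hh.1 y).1 u v
      show c * h (u + v) y = c * h u y + c * h v y
      rw [e1]; ring
    · intro d u
      have e1 : h (d • u) y = d * h u y := (hh.1 y).2 d u
      show c * h (d • u) y = d * (c * h u y)
      rw [e1]; ring
  · intro x; constructor
    · intro u v
      have e1 : h x (u + v) = h x u + h x v := (hh.2 x).1 u v
      show c * h x (u + v) = c * h x u + c * h x v
      rw [e1]; ring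
    · intro d u
      have e1 : h x (d • u) = d * h x u := (hh.2 x).2 d u
      show c * h x (d • u) = d * (c * h x u)
      rw [e1]; ring

lemma bilin_negPi {h : V → V → ℝ} (hh : IsBilin h) : IsBilin (-h) := by
  have := bilin_smulPi (-1 : ℝ) hh
  have e : (-1 : ℝ) • h = -h := by funext x y; show (-1 : ℝ) * h x y = - h x y; ring
  rwa [e] at this

lemma bilin_subPi {h k : V → V → ℝ} (hh : IsBilin h) (hk : IsBilin k) : IsBilin (h - k) := by
  have := bilin_addPi hh (bilin_negPi hk)
  have e : h + -k = h - k := by funext x y; show h x y + - k x y = h x y - k x y; ring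
  rwa [e] at this

lemma bilin_symB {h : V → V → ℝ} (hh : IsBilin h) : IsBilin (symB h) := by
  constructor
  · intro y; constructor
    · intro u v
      have e1 : h (u + v) y = h u y + h v y := (hh.1 y).1 u v
      have e2 : h y (u + v) = h y u + h y v := (hh.2 y).1 u v
      show (h (u + v) y + h y (u + v)) / 2 = (h u y + h y u) / 2 + (h v y + h y v) / 2
      rw [e1, e2]; ring
    · intro c u
      have e1 : h (c • u) y = c * h u y := (hh.1 y).2 c u
      have e2 : h y (c • u) = c * h y u := (hh.2 y).2 c u
      show (h (c • u) y + h y (c • u)) / 2 = c * ((h u y + h y u) / 2)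
      rw [e1, e2]; ring
  · intro x; constructor
    · intro u v
      have e1 : h x (u + v) = h x u + h x v := (hh.2 x).1 u v
      have e2 : h (u + v) x = h u x + h v x := (hh.1 x).1 u v
      show (h x (u + v) + h (u + v) x) / 2 = (h x u + h u x) / 2 + (h x v + h v x) / 2
      rw [e1, e2]; ring
    · intro c u
      have e1 : h x (c • u) = c * h x u := (hh.2 x).2 c u
      have e2 : h (c • u) x = c * h u x := (hh.1 x).2 c u
      show (h x (c • u) + h (c • u) x) / 2 = c * ((h x u + h u x) / 2)
      rw [e1, e2]; ring

lemma bilin_lamB {h : V → V → ℝ} (hh : IsBilin h) : IsBilin (lamB h) := by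
  constructor
  · intro y; constructor
    · intro u v
      have e1 : h (u + v) y = h u y + h v y := (hh.1 y).1 u v
      have e2 : h y (u + v) = h y u + h y v := (hh.2 y).1 u v
      show (h (u + v) y - h y (u + v)) / 2 = (h u y - h y u) / 2 + (h v y - h y v) / 2
      rw [e1, e2]; ring
    · intro c u
      have e1 : h (c • u) y = c * h u y := (hh.1 y).2 c u
      have e2 : h y (c • u) = c * h y u := (hh.2 y).2 c u
      show (h (c • u) y - h y (c • u)) / 2 = c * ((h u y - h y u) / 2)
      rw [e1, e2]; ring
  · intro x; constructor
    · intro u v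
      have e1 : h x (u + v) = h x u + h x v := (hh.2 x).1 u v
      have e2 : h (u + v) x = h u x + h v x := (hh.1 x).1 u v
      show (h x (u + v) - h (u + v) x) / 2 = (h x u - h u x) / 2 + (h x v - h v x) / 2
      rw [e1, e2]; ring
    · intro c u
      have e1 : h x (c • u) = c * h x u := (hh.2 x).2 c u
      have e2 : h (c • u) x = c * h u x := (hh.1 x).2 c u
      show (h x (c • u) - h (c • u) x) / 2 = c * ((h x u - h u x) / 2)
      rw [e1, e2]; ring

end AuxLin

section AuxMat

lemma gmat_det_ne (hgb : IsBilin g) (hgs : ∀ x y, g x y = g y x)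
    (hgnd : ∀ x : V, (∀ y : V, g x y = 0) → x = 0) :
    (Matrix.of fun i j => g (b i) (b j)).det ≠ 0 := by
  intro hdet
  obtain ⟨v, hv, hmv⟩ := Matrix.exists_mulVec_eq_zero_iff.mpr hdet
  set x := ∑ i, v i • b i with hx
  have hgx : ∀ i, g (b i) x = 0 := by
    intro i
    have h2 := (hgb.2 (b i)).sum_smul v b
    rw [← hx] at h2
    rw [h2]
    have h3 := congrFun hmv i
    simpa [Matrix.mulVec, dotProduct, mul_comm] using h3
  have hzero : x = 0 := by
    apply hgnd
    intro y
    have hy := b.sum_repr y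
    have h4 := (hgb.2 x).sum_smul (fun i => b.repr y i) b
    rw [hy] at h4
    rw [h4]
    apply Finset.sum_eq_zero
    intro i _
    rw [hgs x (b i), hgx i, mul_zero]
  apply hv
  have h5 : b.repr x = b.repr 0 := by rw [hzero]
  simp only [map_zero] at h5
  funext i
  have h6 : b.repr x i = v i := by rw [hx]; simp [Finsupp.single_apply]
  rw [← h6, h5]; rfl

lemma ginv_mul_self (hgb : IsBilin g) (hgs : ∀ x y, g x y = g y x)
    (hgnd : ∀ x : V, (∀ y : V, g x y = 0) → x = 0) :
    ginv n b g * (Matrix.of fun i j => g (b i) (b j)) = 1 :=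
  Matrix.nonsing_inv_mul _ (isUnit_iff_ne_zero.mpr (gmat_det_ne n b g hgb hgs hgnd))

lemma master (hgb : IsBilin g) (hgs : ∀ x y, g x y = g y x)
    (hgnd : ∀ x : V, (∀ y : V, g x y = 0) → x = 0)
    {f : V → ℝ} (hf : IsLin f) (x : V) :
    ∑ i, ∑ j, ginv n b g i j * (g (b i) x * f (b j)) = f x := by
  have hrep : ∀ i, g (b i) x = ∑ k, b.repr x k * g (b i) (b k) := by
    intro i
    conv_lhs => rw [← b.sum_repr x]
    exact (hgb.2 (b i)).sum_smul _ _
  have step1 : ∑ i, ∑ j, ginv n b g i j * (g (b i) x * f (b j))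
      = ∑ j, ∑ k, (∑ i, ginv n b g i j * g (b i) (b k)) * (b.repr x k * f (b j)) := by
    rw [Finset.sum_comm]
    apply Finset.sum_congr rfl; intro j _
    have h7 : ∀ i, ginv n b g i j * (g (b i) x * f (b j))
        = ∑ k, (ginv n b g i j * g (b i) (b k)) * (b.repr x k * f (b j)) := by
      intro i
      rw [hrep i, Finset.sum_mul, Finset.mul_sum]
      apply Finset.sum_congr rfl; intro k _; ring
    simp only [h7]
    rw [Finset.sum_comm]
    apply Finset.sum_congr rfl; intro k _
    rw [Finset.sum_mul]
  rw [step1]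
  have step2 : ∀ j k, (∑ i, ginv n b g i j * g (b i) (b k)) = if j = k then 1 else 0 := by
    intro j k
    have h8 : ∑ i, ginv n b g i j * g (b i) (b k)
        = ∑ i, ginv n b g j i * (Matrix.of fun i j => g (b i) (b j)) i k := by
      apply Finset.sum_congr rfl; intro i _
      rw [ginv_symm n b g hgs i j]; rfl
    rw [h8, ← Matrix.mul_apply, ginv_mul_self n b g hgb hgs hgnd, Matrix.one_apply]
  simp only [step2]
  have step3 : ∀ j, ∑ k, (if j = k then (1:ℝ) else 0) * (b.repr x k * f (b j))
      = b.repr x j * f (b j) := by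
    intro j
    rw [Finset.sum_eq_single j]
    · simp
    · intro k _ hk; simp [Ne.symm hk, if_neg]
    · intro h; exact absurd (Finset.mem_univ j) h
  simp only [step3]
  have h9 := hf.sum_smul (fun k => b.repr x k) b
  rw [b.sum_repr x] at h9
  rw [h9]

lemma gtrace (hgb : IsBilin g) (hgs : ∀ x y, g x y = g y x)
    (hgnd : ∀ x : V, (∀ y : V, g x y = 0) → x = 0) :
    ∑ i, ∑ j, ginv n b g i j * g (b i) (b j) = (n : ℝ) := by
  have h1 : ∀ i, ∑ j, ginv n b g i j * g (b i) (b j)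
      = ∑ j, ginv n b g i j * (Matrix.of fun i j => g (b i) (b j)) j i := by
    intro i; apply Finset.sum_congr rfl; intro j _
    show _ = ginv n b g i j * g (b j) (b i); rw [hgs (b i) (b j)]
  simp only [h1, ← Matrix.mul_apply, ginv_mul_self n b g hgb hgs hgnd]
  simp [Matrix.one_apply]

lemma swapd (hgs : ∀ x y, g x y = g y x) (φ : Fin n → Fin n → ℝ) :
    ∑ i, ∑ j, ginv n b g i j * φ i j = ∑ i, ∑ j, ginv n b g i j * φ j i := by
  rw [Finset.sum_comm]
  exact Finset.sum_congr rfl fun i _ => Finset.sum_congr rfl fun j _ => by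
    rw [ginv_symm n b g hgs]

lemma masterB (hgb : IsBilin g) (hgs : ∀ x y, g x y = g y x)
    (hgnd : ∀ x : V, (∀ y : V, g x y = 0) → x = 0)
    {f : V → ℝ} (hf : IsLin f) (x : V) :
    ∑ i, ∑ j, ginv n b g i j * (f (b i) * g (b j) x) = f x := by
  rw [swapd n b g hgs (fun i j => f (b i) * g (b j) x)]
  have h1 : ∀ i j, ginv n b g i j * (f (b j) * g (b i) x)
      = ginv n b g i j * (g (b i) x * f (b j)) := by intro i j; ring
  calc ∑ i, ∑ j, ginv n b g i j * (f (b j) * g (b i) x)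
      = ∑ i, ∑ j, ginv n b g i j * (g (b i) x * f (b j)) :=
        Finset.sum_congr rfl fun i _ => Finset.sum_congr rfl fun j _ => h1 i j
    _ = f x := master n b g hgb hgs hgnd hf x

lemma dzero (hgs : ∀ x y, g x y = g y x) {φ : Fin n → Fin n → ℝ}
    (hanti : ∀ i j, φ i j = - φ j i) :
    ∑ i, ∑ j, ginv n b g i j * φ i j = 0 := by
  have h1 := swapd n b g hgs φ
  have h2 : ∑ i, ∑ j, ginv n b g i j * φ j i
      = - ∑ i, ∑ j, ginv n b g i j * φ i j := by
    rw [← Finset.sum_neg_distrib]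
    apply Finset.sum_congr rfl; intro i _
    rw [← Finset.sum_neg_distrib]
    apply Finset.sum_congr rfl; intro j _
    rw [hanti j i]; ring
  rw [h2] at h1
  linarith

lemma dsum2 (c1 c2 : ℝ) (A B : Fin n → Fin n → ℝ) :
    ∑ i, ∑ j, (c1 * A i j + c2 * B i j)
      = c1 * (∑ i, ∑ j, A i j) + c2 * (∑ i, ∑ j, B i j) := by
  simp [Finset.sum_add_distrib, Finset.mul_sum]

lemma dsum4 (c1 c2 c3 c4 : ℝ) (A B C D : Fin n → Fin n → ℝ) :
    ∑ i, ∑ j, (c1 * A i j + c2 * B i j + c3 * C i j + c4 * D i j)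
      = c1 * (∑ i, ∑ j, A i j) + c2 * (∑ i, ∑ j, B i j)
        + c3 * (∑ i, ∑ j, C i j) + c4 * (∑ i, ∑ j, D i j) := by
  simp [Finset.sum_add_distrib, Finset.mul_sum]

lemma dsum6 (c1 c2 c3 c4 c5 c6 : ℝ) (A B C D E G : Fin n → Fin n → ℝ) :
    ∑ i, ∑ j, (c1 * A i j + c2 * B i j + c3 * C i j + c4 * D i j + c5 * E i j + c6 * G i j)
      = c1 * (∑ i, ∑ j, A i j) + c2 * (∑ i, ∑ j, B i j)
        + c3 * (∑ i, ∑ j, C i j) + c4 * (∑ i, ∑ j, D i j)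
        + c5 * (∑ i, ∑ j, E i j) + c6 * (∑ i, ∑ j, G i j) := by
  simp [Finset.sum_add_distrib, Finset.mul_sum]

lemma sum3_rot (X : Fin n → Fin n → Fin n → ℝ) :
    ∑ p, ∑ q, ∑ a, X a p q = ∑ a, ∑ p, ∑ q, X a p q := by
  have h1 : ∀ p : Fin n, ∑ q, ∑ a, X a p q = ∑ a, ∑ q, X a p q := fun p => Finset.sum_comm
  simp only [h1]
  exact Finset.sum_comm

end AuxMat

section AuxRic

lemma bilin_Ric {F : V → V → V → V → ℝ} (hF : IsMulti4 F) : IsBilin (Ric n b g F) := by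
  constructor
  · intro y
    exact isLin_dsum fun i j => isLin_const_mul _ (hF.2.1 (b i) y (b j))
  · intro x
    exact isLin_dsum fun i j => isLin_const_mul _ (hF.2.2.1 (b i) x (b j))

lemma bilin_RicS {F : V → V → V → V → ℝ} (hF : IsMulti4 F) : IsBilin (RicS n b g F) := by
  constructor
  · intro y
    exact isLin_dsum fun i j => isLin_const_mul _ (hF.1 (b i) (b j) y)
  · intro x
    exact isLin_dsum fun i j => isLin_const_mul _ (hF.2.2.2 x (b i) (b j))

lemma Ric_add (T S : V → V → V → V → ℝ) :
    Ric n b g (T + S) = Ric n b g T + Ric n b g S := by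
  funext x y
  show ∑ i, ∑ j, ginv n b g i j * (T (b i) x y (b j) + S (b i) x y (b j)) = _
  simp [mul_add, Finset.sum_add_distrib, Ric]

lemma Ric_smul (c : ℝ) (T : V → V → V → V → ℝ) :
    Ric n b g (c • T) = c • Ric n b g T := by
  funext x y
  show ∑ i, ∑ j, ginv n b g i j * (c * T (b i) x y (b j)) = c * ∑ i, ∑ j, _
  simp only [Finset.mul_sum]
  exact Finset.sum_congr rfl fun i _ => Finset.sum_congr rfl fun j _ => by ring

lemma Ric_sub (T S : V → V → V → V → ℝ) :
    Ric n b g (T - S) = Ric n b g T - Ric n b g S := by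
  funext x y
  show ∑ i, ∑ j, ginv n b g i j * (T (b i) x y (b j) - S (b i) x y (b j)) = _
  simp [mul_sub, Finset.sum_sub_distrib, Ric]

lemma trg_add (h k : V → V → ℝ) : trg n b g (h + k) = trg n b g h + trg n b g k := by
  show ∑ i, ∑ j, ginv n b g i j * (h (b i) (b j) + k (b i) (b j)) = _
  simp [mul_add, Finset.sum_add_distrib, trg]

lemma trg_sub (h k : V → V → ℝ) : trg n b g (h - k) = trg n b g h - trg n b g k := by
  show ∑ i, ∑ j, ginv n b g i j * (h (b i) (b j) - k (b i) (b j)) = _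
  simp [mul_sub, Finset.sum_sub_distrib, trg]

lemma trg_smul (c : ℝ) (h : V → V → ℝ) : trg n b g (c • h) = c * trg n b g h := by
  show ∑ i, ∑ j, ginv n b g i j * (c * h (b i) (b j)) = c * ∑ i, ∑ j, _
  simp only [Finset.mul_sum]
  exact Finset.sum_congr rfl fun i _ => Finset.sum_congr rfl fun j _ => by ring

lemma trg_gg (hgb : IsBilin g) (hgs : ∀ x y, g x y = g y x)
    (hgnd : ∀ x : V, (∀ y : V, g x y = 0) → x = 0) : trg n b g g = (n : ℝ) :=
  gtrace n b g hgb hgs hgnd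

lemma trg_symB (hgs : ∀ x y, g x y = g y x) (h : V → V → ℝ) :
    trg n b g (symB h) = trg n b g h := by
  show ∑ i, ∑ j, ginv n b g i j * ((h (b i) (b j) + h (b j) (b i)) / 2) = _
  have e : ∀ i j : Fin n, ginv n b g i j * ((h (b i) (b j) + h (b j) (b i)) / 2)
      = (1/2 : ℝ) * (ginv n b g i j * h (b i) (b j))
        + (1/2 : ℝ) * (ginv n b g i j * h (b j) (b i)) := by intro i j; ring
  calc ∑ i, ∑ j, ginv n b g i j * ((h (b i) (b j) + h (b j) (b i)) / 2)
      = ∑ i, ∑ j, ((1/2 : ℝ) * (ginv n b g i j * h (b i) (b j))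
          + (1/2 : ℝ) * (ginv n b g i j * h (b j) (b i))) :=
        Finset.sum_congr rfl fun i _ => Finset.sum_congr rfl fun j _ => e i j
    _ = (1/2 : ℝ) * (∑ i, ∑ j, ginv n b g i j * h (b i) (b j))
          + (1/2 : ℝ) * (∑ i, ∑ j, ginv n b g i j * h (b j) (b i)) :=
        dsum2 n _ _ _ _
    _ = trg n b g h := by
        rw [← swapd n b g hgs (fun i j => h (b i) (b j))]
        show _ = ∑ i, ∑ j, ginv n b g i j * h (b i) (b j)
        ring

lemma trg_lamB (hgs : ∀ x y, g x y = g y x) (h : V → V → ℝ) :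
    trg n b g (lamB h) = 0 := by
  show ∑ i, ∑ j, ginv n b g i j * ((h (b i) (b j) - h (b j) (b i)) / 2) = 0
  exact dzero n b g hgs (fun i j => by ring)

lemma trg_Ric (F : V → V → V → V → ℝ) : trg n b g (Ric n b g F) = tau n b g F := by
  show ∑ p, ∑ q, ginv n b g p q * (∑ i, ∑ j, ginv n b g i j * F (b i) (b p) (b q) (b j))
      = ∑ i, ∑ j, ∑ k, ∑ l, ginv n b g i l * ginv n b g j k * F (b i) (b j) (b k) (b l)
  have e : ∀ p q : Fin n, ginv n b g p q * (∑ i, ∑ j, ginv n b g i j * F (b i) (b p) (b q) (b j))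
      = ∑ i, ∑ j, ginv n b g i j * ginv n b g p q * F (b i) (b p) (b q) (b j) := by
    intro p q
    rw [Finset.mul_sum]
    apply Finset.sum_congr rfl; intro i _
    rw [Finset.mul_sum]
    apply Finset.sum_congr rfl; intro j _; ring
  simp only [e]
  -- LHS : ∑ p ∑ q ∑ i ∑ j,  w i j * w p q * F i p q j
  -- RHS : ∑ i ∑ p ∑ q ∑ j,  w i j * w p q * F i p q j  (after renaming RHS vars i j k l → i p q j)
  have lhs_rot : ∑ p, ∑ q, ∑ i, (∑ j, ginv n b g i j * ginv n b g p q * F (b i) (b p) (b q) (b j))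
      = ∑ i, ∑ p, ∑ q, (∑ j, ginv n b g i j * ginv n b g p q * F (b i) (b p) (b q) (b j)) :=
    sum3_rot n (fun a p q => ∑ j, ginv n b g a j * ginv n b g p q * F (b a) (b p) (b q) (b j))
  rw [lhs_rot]

lemma trg_RicS (F : V → V → V → V → ℝ) : trg n b g (RicS n b g F) = tau n b g F := by
  show ∑ p, ∑ q, ginv n b g p q * (∑ i, ∑ j, ginv n b g i j * F (b p) (b i) (b j) (b q))
      = ∑ i, ∑ j, ∑ k, ∑ l, ginv n b g i l * ginv n b g j k * F (b i) (b j) (b k) (b l)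
  have e : ∀ p q : Fin n, ginv n b g p q * (∑ i, ∑ j, ginv n b g i j * F (b p) (b i) (b j) (b q))
      = ∑ i, ∑ j, ginv n b g p q * ginv n b g i j * F (b p) (b i) (b j) (b q) := by
    intro p q
    rw [Finset.mul_sum]
    apply Finset.sum_congr rfl; intro i _
    rw [Finset.mul_sum]
    apply Finset.sum_congr rfl; intro j _; ring
  simp only [e]
  -- LHS : ∑ p ∑ q ∑ i ∑ j, w p q * w i j * F p i j q
  -- RHS rename i j k l → p i j q : ∑ p ∑ i ∑ j ∑ q, w p q * w i j * F p i j q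
  apply Finset.sum_congr rfl; intro p _
  -- goal: ∑ q ∑ i ∑ j t = ∑ i ∑ j ∑ q t
  exact (sum3_rot n (fun q i j => ginv n b g p q * ginv n b g i j * F (b p) (b i) (b j) (b q))).symm

end AuxRic

section AuxBlocks

lemma K4 (hgs : ∀ x y, g x y = g y x) {F : V → V → V → V → ℝ}
    (ha : ∀ x y z w, F x y z w = - F y x z w) (x y : V) :
    ∑ i, ∑ j, ginv n b g i j * F (b i) (b j) x y = 0 :=
  dzero n b g hgs (fun i j => ha (b i) (b j) x y)

lemma K3 (hgs : ∀ x y, g x y = g y x) {F : V → V → V → V → ℝ} (hF : F ∈ rSet V) (x y : V) :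
    ∑ i, ∑ j, ginv n b g i j * F (b i) x (b j) y = - RicS n b g F x y := by
  have e : ∀ i j : Fin n, ginv n b g i j * F (b i) x (b j) y
      = (-1 : ℝ) * (ginv n b g i j * F x (b j) (b i) y)
        + (-1 : ℝ) * (ginv n b g i j * F (b j) (b i) x y) := by
    intro i j
    have hb := hF.2.2 (b i) x (b j) y
    have h1 : F (b i) x (b j) y = - F x (b j) (b i) y - F (b j) (b i) x y := by linarith
    rw [h1]; ring
  calc ∑ i, ∑ j, ginv n b g i j * F (b i) x (b j) y
      = ∑ i, ∑ j, ((-1 : ℝ) * (ginv n b g i j * F x (b j) (b i) y)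
          + (-1 : ℝ) * (ginv n b g i j * F (b j) (b i) x y)) :=
        Finset.sum_congr rfl fun i _ => Finset.sum_congr rfl fun j _ => e i j
    _ = (-1 : ℝ) * (∑ i, ∑ j, ginv n b g i j * F x (b j) (b i) y)
          + (-1 : ℝ) * (∑ i, ∑ j, ginv n b g i j * F (b j) (b i) x y) := dsum2 n _ _ _ _
    _ = - RicS n b g F x y := by
        rw [swapd n b g hgs (fun i j => F x (b j) (b i) y),
          swapd n b g hgs (fun i j => F (b j) (b i) x y)]
        have h2 : ∑ i, ∑ j, ginv n b g i j * F (b i) (b j) x y = 0 := K4 n b g hgs hF.2.1 x y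
        rw [h2]
        show (-1 : ℝ) * RicS n b g F x y + (-1) * 0 = - RicS n b g F x y
        ring

lemma K5 {F : V → V → V → V → ℝ} (hF : F ∈ rSet V) (x y : V) :
    ∑ i, ∑ j, ginv n b g i j * F x y (b i) (b j)
      = Ric n b g F y x - Ric n b g F x y := by
  have e : ∀ i j : Fin n, ginv n b g i j * F x y (b i) (b j)
      = (1 : ℝ) * (ginv n b g i j * F (b i) y x (b j))
        + (-1 : ℝ) * (ginv n b g i j * F (b i) x y (b j)) := by
    intro i j
    have hb := hF.2.2 x y (b i) (b j)
    have hs := hF.2.1 y (b i) x (b j)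
    have h1 : F x y (b i) (b j) = F (b i) y x (b j) - F (b i) x y (b j) := by linarith
    rw [h1]; ring
  calc ∑ i, ∑ j, ginv n b g i j * F x y (b i) (b j)
      = ∑ i, ∑ j, ((1 : ℝ) * (ginv n b g i j * F (b i) y x (b j))
          + (-1 : ℝ) * (ginv n b g i j * F (b i) x y (b j))) :=
        Finset.sum_congr rfl fun i _ => Finset.sum_congr rfl fun j _ => e i j
    _ = (1 : ℝ) * (∑ i, ∑ j, ginv n b g i j * F (b i) y x (b j))
          + (-1 : ℝ) * (∑ i, ∑ j, ginv n b g i j * F (b i) x y (b j)) := dsum2 n _ _ _ _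
    _ = Ric n b g F y x - Ric n b g F x y := by
        show (1 : ℝ) * Ric n b g F y x + (-1 : ℝ) * Ric n b g F x y = _
        ring

lemma Ric_wedge (hgb : IsBilin g) (hgs : ∀ x y, g x y = g y x)
    (hgnd : ∀ x : V, (∀ y : V, g x y = 0) → x = 0)
    (t : ℝ) {h : V → V → ℝ} (hh : IsBilin h) (x y : V) :
    Ric n b g (wedge t h g) x y
      = (1 + t - (n : ℝ)) * h x y - t * trg n b g h * g x y := by
  have e : ∀ i j : Fin n, ginv n b g i j * wedge t h g (b i) x y (b j)
      = (1 : ℝ) * (ginv n b g i j * (h (b i) y * g (b j) x))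
        + (- h x y) * (ginv n b g i j * g (b i) (b j))
        + (- (t * g x y)) * (ginv n b g i j * h (b i) (b j))
        + t * (ginv n b g i j * (g (b i) y * h x (b j))) := by
    intro i j
    show ginv n b g i j * (h (b i) y * g x (b j) - h x y * g (b i) (b j)
        - t * (h (b i) (b j) * g x y - h x (b j) * g (b i) y)) = _
    rw [hgs x (b j)]; ring
  show ∑ i, ∑ j, ginv n b g i j * wedge t h g (b i) x y (b j) = _
  calc ∑ i, ∑ j, ginv n b g i j * wedge t h g (b i) x y (b j)
      = ∑ i, ∑ j, ((1 : ℝ) * (ginv n b g i j * (h (b i) y * g (b j) x))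
          + (- h x y) * (ginv n b g i j * g (b i) (b j))
          + (- (t * g x y)) * (ginv n b g i j * h (b i) (b j))
          + t * (ginv n b g i j * (g (b i) y * h x (b j)))) :=
        Finset.sum_congr rfl fun i _ => Finset.sum_congr rfl fun j _ => e i j
    _ = (1 : ℝ) * (∑ i, ∑ j, ginv n b g i j * (h (b i) y * g (b j) x))
          + (- h x y) * (∑ i, ∑ j, ginv n b g i j * g (b i) (b j))
          + (- (t * g x y)) * (∑ i, ∑ j, ginv n b g i j * h (b i) (b j))
          + t * (∑ i, ∑ j, ginv n b g i j * (g (b i) y * h x (b j))) := dsum4 n _ _ _ _ _ _ _ _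
    _ = (1 + t - (n : ℝ)) * h x y - t * trg n b g h * g x y := by
        rw [masterB n b g hgb hgs hgnd (hh.1 y) x,
          gtrace n b g hgb hgs hgnd,
          master n b g hgb hgs hgnd (hh.2 x) y]
        show (1:ℝ) * h x y + (- h x y) * n + (-(t * g x y)) * trg n b g h + t * h x y = _
        ring

lemma Ric_prodB (hgb : IsBilin g) (hgs : ∀ x y, g x y = g y x)
    (hgnd : ∀ x : V, (∀ y : V, g x y = 0) → x = 0)
    {h : V → V → ℝ} (hh : IsBilin h) (x y : V) :
    Ric n b g (prodB h g) x y = h y x := by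
  have e : ∀ i j : Fin n, ginv n b g i j * prodB h g (b i) x y (b j)
      = ginv n b g i j * (h (b i) x * g (b j) y) := by
    intro i j
    show ginv n b g i j * (h (b i) x * g y (b j)) = _
    rw [hgs y (b j)]
  show ∑ i, ∑ j, ginv n b g i j * prodB h g (b i) x y (b j) = _
  calc ∑ i, ∑ j, ginv n b g i j * prodB h g (b i) x y (b j)
      = ∑ i, ∑ j, ginv n b g i j * (h (b i) x * g (b j) y) :=
        Finset.sum_congr rfl fun i _ => Finset.sum_congr rfl fun j _ => e i j
    _ = h y x := masterB n b g hgb hgs hgnd (hh.1 x) y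

lemma Ric_psi (hgs : ∀ x y, g x y = g y x) {F : V → V → V → V → ℝ}
    (hF : F ∈ rSet V) (x y : V) :
    Ric n b g (psi F) x y
      = (Ric n b g F x y + Ric n b g F y x + RicS n b g F x y + RicS n b g F y x) / 4 := by
  have e : ∀ i j : Fin n, ginv n b g i j * psi F (b i) x y (b j)
      = (1/4 : ℝ) * (ginv n b g i j * F (b i) x y (b j))
        + (1/4 : ℝ) * (ginv n b g i j * F x (b i) (b j) y)
        + (1/4 : ℝ) * (ginv n b g i j * F y (b j) (b i) x)
        + (1/4 : ℝ) * (ginv n b g i j * F (b j) y x (b i)) := by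
    intro i j
    show ginv n b g i j * ((F (b i) x y (b j) + F x (b i) (b j) y
        + F y (b j) (b i) x + F (b j) y x (b i)) / 4) = _
    ring
  show ∑ i, ∑ j, ginv n b g i j * psi F (b i) x y (b j) = _
  calc ∑ i, ∑ j, ginv n b g i j * psi F (b i) x y (b j)
      = ∑ i, ∑ j, ((1/4 : ℝ) * (ginv n b g i j * F (b i) x y (b j))
          + (1/4 : ℝ) * (ginv n b g i j * F x (b i) (b j) y)
          + (1/4 : ℝ) * (ginv n b g i j * F y (b j) (b i) x)
          + (1/4 : ℝ) * (ginv n b g i j * F (b j) y x (b i))) :=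
        Finset.sum_congr rfl fun i _ => Finset.sum_congr rfl fun j _ => e i j
    _ = (1/4 : ℝ) * (∑ i, ∑ j, ginv n b g i j * F (b i) x y (b j))
          + (1/4 : ℝ) * (∑ i, ∑ j, ginv n b g i j * F x (b i) (b j) y)
          + (1/4 : ℝ) * (∑ i, ∑ j, ginv n b g i j * F y (b j) (b i) x)
          + (1/4 : ℝ) * (∑ i, ∑ j, ginv n b g i j * F (b j) y x (b i)) := dsum4 n _ _ _ _ _ _ _ _
    _ = (Ric n b g F x y + Ric n b g F y x + RicS n b g F x y + RicS n b g F y x) / 4 := by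
        rw [swapd n b g hgs (fun i j => F y (b j) (b i) x),
          swapd n b g hgs (fun i j => F (b j) y x (b i))]
        show (1/4 : ℝ) * Ric n b g F x y + (1/4 : ℝ) * RicS n b g F x y
          + (1/4 : ℝ) * RicS n b g F y x + (1/4 : ℝ) * Ric n b g F y x = _
        ring

lemma Ric_mu (hgs : ∀ x y, g x y = g y x) {F : V → V → V → V → ℝ}
    (hF : F ∈ rSet V) (x y : V) :
    Ric n b g (mu F) x y
      = (5 * Ric n b g F x y - Ric n b g F y x
          - 3 * RicS n b g F x y - RicS n b g F y x) / 8 := by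
  have e : ∀ i j : Fin n, ginv n b g i j * mu F (b i) x y (b j)
      = (3/8 : ℝ) * (ginv n b g i j * F (b i) x y (b j))
        + (3/8 : ℝ) * (ginv n b g i j * F (b i) x (b j) y)
        + (1/8 : ℝ) * (ginv n b g i j * F (b i) (b j) y x)
        + (1/8 : ℝ) * (ginv n b g i j * F (b i) y (b j) x)
        + (1/8 : ℝ) * (ginv n b g i j * F (b j) x y (b i))
        + (1/8 : ℝ) * (ginv n b g i j * F y x (b j) (b i)) := by
    intro i j
    show ginv n b g i j * ((3 * F (b i) x y (b j) + 3 * F (b i) x (b j) y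
        + F (b i) (b j) y x + F (b i) y (b j) x + F (b j) x y (b i) + F y x (b j) (b i)) / 8) = _
    ring
  show ∑ i, ∑ j, ginv n b g i j * mu F (b i) x y (b j) = _
  calc ∑ i, ∑ j, ginv n b g i j * mu F (b i) x y (b j)
      = ∑ i, ∑ j, ((3/8 : ℝ) * (ginv n b g i j * F (b i) x y (b j))
          + (3/8 : ℝ) * (ginv n b g i j * F (b i) x (b j) y)
          + (1/8 : ℝ) * (ginv n b g i j * F (b i) (b j) y x)
          + (1/8 : ℝ) * (ginv n b g i j * F (b i) y (b j) x)
          + (1/8 : ℝ) * (ginv n b g i j * F (b j) x y (b i))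
          + (1/8 : ℝ) * (ginv n b g i j * F y x (b j) (b i))) :=
        Finset.sum_congr rfl fun i _ => Finset.sum_congr rfl fun j _ => e i j
    _ = (3/8 : ℝ) * (∑ i, ∑ j, ginv n b g i j * F (b i) x y (b j))
          + (3/8 : ℝ) * (∑ i, ∑ j, ginv n b g i j * F (b i) x (b j) y)
          + (1/8 : ℝ) * (∑ i, ∑ j, ginv n b g i j * F (b i) (b j) y x)
          + (1/8 : ℝ) * (∑ i, ∑ j, ginv n b g i j * F (b i) y (b j) x)
          + (1/8 : ℝ) * (∑ i, ∑ j, ginv n b g i j * F (b j) x y (b i))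
          + (1/8 : ℝ) * (∑ i, ∑ j, ginv n b g i j * F y x (b j) (b i)) :=
        dsum6 n _ _ _ _ _ _ _ _ _ _ _ _
    _ = (5 * Ric n b g F x y - Ric n b g F y x
          - 3 * RicS n b g F x y - RicS n b g F y x) / 8 := by
        rw [K3 n b g hgs hF x y, K4 n b g hgs hF.2.1 y x, K3 n b g hgs hF y x,
          swapd n b g hgs (fun i j => F (b j) x y (b i)),
          swapd n b g hgs (fun i j => F y x (b j) (b i))]
        rw [show ∑ i, ∑ j, ginv n b g i j * F y x (b i) (b j)
            = Ric n b g F x y - Ric n b g F y x from K5 n b g hF y x]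
        show (3/8 : ℝ) * Ric n b g F x y + (3/8 : ℝ) * (- RicS n b g F x y)
          + (1/8 : ℝ) * 0 + (1/8 : ℝ) * (- RicS n b g F y x)
          + (1/8 : ℝ) * Ric n b g F x y
          + (1/8 : ℝ) * (Ric n b g F x y - Ric n b g F y x) = _
        ring

end AuxBlocks

lemma trg_zero : trg n b g (0 : V → V → ℝ) = 0 := by
  show ∑ i, ∑ j, ginv n b g i j * (0 : ℝ) = 0
  simp

theorem stmt7 {V : Type*} [AddCommGroup V] [Module ℝ V]
    (n : ℕ) (hn : 3 ≤ n) (b : Module.Basis (Fin n) ℝ V)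
    (g : V → V → ℝ) (hgb : IsBilin g) (hgs : ∀ x y, g x y = g y x)
    (hgnd : ∀ x : V, (∀ y : V, g x y = 0) → x = 0) :
    ∀ F ∈ rSet V,
      Ric n b g (pi1 n b g F) = ((tau n b g F) / (n : ℝ)) • g ∧
      Ric n b g (pi2 n b g F) = (-(tau n b g F) / (n : ℝ)) • g + symB (Ric n b g F) ∧
      Ric n b g (pi3 n b g F) = lamB (Ric n b g F) ∧
      Ric n b g (pi4 n b g F) = 0 ∧ Ric n b g (pi5 n b g F) = 0 ∧
      Ric n b g (pi6 n b g F) = 0 ∧ Ric n b g (pi7 n b g F) = 0 ∧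
      Ric n b g (pi8 n b g F) = 0 ∧
      trg n b g (Ric n b g (pi2 n b g F)) = 0 ∧ trg n b g (Ric n b g (pi3 n b g F)) = 0 ∧
      trg n b g (Ric n b g (pi4 n b g F)) = 0 ∧ trg n b g (Ric n b g (pi5 n b g F)) = 0 ∧
      trg n b g (Ric n b g (pi6 n b g F)) = 0 ∧ trg n b g (Ric n b g (pi7 n b g F)) = 0 ∧
      trg n b g (Ric n b g (pi8 n b g F)) = 0 := by
  intro F hF
  have hnR : (3 : ℝ) ≤ (n : ℝ) := by exact_mod_cast hn
  have n0 : (n : ℝ) ≠ 0 := by linarith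
  have n1 : (n : ℝ) - 1 ≠ 0 := by intro h; linarith
  have n2 : (n : ℝ) - 2 ≠ 0 := by intro h; linarith
  have np1 : (n : ℝ) + 1 ≠ 0 := by intro h; linarith
  have np2 : (n : ℝ) + 2 ≠ 0 := by intro h; linarith
  have nsq : (n : ℝ) ^ 2 - 4 ≠ 0 := by
    intro h; have : ((n:ℝ) - 2) * ((n:ℝ) + 2) = 0 := by nlinarith
    rcases mul_eq_zero.mp this with h' | h' <;> [exact n2 h'; exact np2 h']
  have hbR : IsBilin (Ric n b g F) := bilin_Ric n b g hF.1
  have hbRS : IsBilin (RicS n b g F) := bilin_RicS n b g hF.1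
  -- π₁
  have P1 : Ric n b g (pi1 n b g F) = ((tau n b g F) / (n : ℝ)) • g := by
    rw [pi1, Ric_smul]
    funext x y
    simp only [Pi.smul_apply, smul_eq_mul]
    rw [Ric_wedge n b g hgb hgs hgnd 0 hgb x y, trg_gg n b g hgb hgs hgnd]
    field_simp
    ring
  -- π₂
  have P2 : Ric n b g (pi2 n b g F)
      = (-(tau n b g F) / (n : ℝ)) • g + symB (Ric n b g F) := by
    rw [pi2, Ric_smul]
    funext x y
    have hh : IsBilin ((tau n b g F / (n:ℝ)) • g - symB (Ric n b g F)) :=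
      bilin_subPi (bilin_smulPi _ hgb) (bilin_symB hbR)
    simp only [Pi.smul_apply, Pi.add_apply, Pi.sub_apply, smul_eq_mul]
    rw [Ric_wedge n b g hgb hgs hgnd 0 hh x y]
    simp only [Pi.sub_apply, Pi.smul_apply, smul_eq_mul]
    field_simp
    ring
  -- π₃
  have P3 : Ric n b g (pi3 n b g F) = lamB (Ric n b g F) := by
    have hhL : IsBilin (lamB (Ric n b g F)) := bilin_lamB hbR
    rw [pi3, Ric_smul, Ric_add, Ric_smul]
    funext x y
    simp only [Pi.smul_apply, Pi.add_apply, smul_eq_mul]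
    rw [Ric_prodB n b g hgb hgs hgnd hhL x y, Ric_wedge n b g hgb hgs hgnd 0 hhL x y]
    simp only [lamB]
    field_simp
    ring
  -- π₄
  have P4 : Ric n b g (pi4 n b g F) = 0 := by
    have hhLS : IsBilin (lamB (RicS n b g F)) := bilin_lamB hbRS
    have hhL : IsBilin (lamB (Ric n b g F)) := bilin_lamB hbR
    rw [pi4, Ric_sub, Ric_smul, Ric_smul, Ric_add, Ric_add, Ric_smul, Ric_smul]
    funext x y
    simp only [Pi.smul_apply, Pi.add_apply, Pi.sub_apply, Pi.zero_apply, smul_eq_mul]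
    rw [Ric_prodB n b g hgb hgs hgnd hhLS x y,
      Ric_wedge n b g hgb hgs hgnd ((n:ℝ)+1) hhLS x y,
      Ric_prodB n b g hgb hgs hgnd hhL x y,
      Ric_wedge n b g hgb hgs hgnd ((n:ℝ)+1) hhL x y,
      trg_lamB n b g hgs, trg_lamB n b g hgs]
    simp only [lamB]
    ring
  -- π₅
  have P5 : Ric n b g (pi5 n b g F) = 0 := by
    have hh5 : IsBilin (symB (Ric n b g F + ((n:ℝ)-1) • RicS n b g F)) :=
      bilin_symB (bilin_addPi hbR (bilin_smulPi _ hbRS))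
    rw [pi5, Ric_smul, Ric_sub, Ric_smul, Ric_smul]
    funext x y
    simp only [Pi.smul_apply, Pi.sub_apply, Pi.zero_apply, smul_eq_mul]
    rw [Ric_wedge n b g hgb hgs hgnd 0 hgb x y,
      Ric_wedge n b g hgb hgs hgnd ((n:ℝ)-1) hh5 x y,
      trg_gg n b g hgb hgs hgnd,
      trg_symB n b g hgs, trg_add, trg_smul, trg_Ric, trg_RicS]
    simp only [symB, Pi.add_apply, Pi.smul_apply, smul_eq_mul]
    field_simp
    ring
  -- π₆
  have P6 : Ric n b g (pi6 n b g F) = 0 := by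
    have hh6 : IsBilin (symB (Ric n b g F + RicS n b g F)) :=
      bilin_symB (bilin_addPi hbR hbRS)
    rw [pi6, Ric_sub, Ric_add, Ric_smul, Ric_smul]
    funext x y
    simp only [Pi.smul_apply, Pi.add_apply, Pi.sub_apply, Pi.zero_apply, smul_eq_mul]
    rw [Ric_psi n b g hgs hF x y,
      Ric_wedge n b g hgb hgs hgnd 1 hh6 x y,
      Ric_wedge n b g hgb hgs hgnd 0 hgb x y,
      trg_symB n b g hgs, trg_add, trg_Ric, trg_RicS]
    simp only [symB, Pi.add_apply]
    field_simp
    ring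
  -- π₇
  have P7 : Ric n b g (pi7 n b g F) = 0 := by
    have hhs : IsBilin (symB (Ric n b g F - RicS n b g F)) :=
      bilin_symB (bilin_subPi hbR hbRS)
    have hhl : IsBilin (lamB ((3:ℝ) • Ric n b g F - RicS n b g F)) :=
      bilin_lamB (bilin_subPi (bilin_smulPi _ hbR) hbRS)
    rw [pi7, Ric_add, Ric_add, Ric_add, Ric_smul, Ric_smul, Ric_smul]
    funext x y
    simp only [Pi.smul_apply, Pi.add_apply, Pi.sub_apply, Pi.zero_apply, smul_eq_mul]
    rw [Ric_mu n b g hgs hF x y,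
      Ric_wedge n b g hgb hgs hgnd (-1) hhs x y,
      Ric_prodB n b g hgb hgs hgnd hhl x y,
      Ric_wedge n b g hgb hgs hgnd (-1) hhl x y,
      trg_symB n b g hgs, trg_sub, trg_Ric, trg_RicS,
      trg_lamB n b g hgs]
    simp only [symB, lamB, Pi.sub_apply, Pi.smul_apply, smul_eq_mul]
    field_simp
    ring
  -- π₈
  have P8 : Ric n b g (pi8 n b g F) = 0 := by
    have hhl : IsBilin (lamB (Ric n b g F + RicS n b g F)) :=
      bilin_lamB (bilin_addPi hbR hbRS)
    rw [pi8, Ric_add, Ric_add, Ric_sub, Ric_sub, Ric_smul, Ric_smul]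
    funext x y
    simp only [Pi.smul_apply, Pi.add_apply, Pi.sub_apply, Pi.zero_apply, smul_eq_mul]
    rw [Ric_psi n b g hgs hF x y, Ric_mu n b g hgs hF x y,
      Ric_prodB n b g hgb hgs hgnd hhl x y,
      Ric_wedge n b g hgb hgs hgnd 3 hhl x y,
      trg_lamB n b g hgs]
    simp only [lamB, Pi.add_apply]
    field_simp
    ring
  refine ⟨P1, P2, P3, P4, P5, P6, P7, P8, ?_, ?_, ?_, ?_, ?_, ?_, ?_⟩
  · rw [P2, trg_add, trg_smul, trg_gg n b g hgb hgs hgnd, trg_symB n b g hgs, trg_Ric]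
    field_simp
    ring
  · rw [P3, trg_lamB n b g hgs]
  · rw [P4, trg_zero]
  · rw [P5, trg_zero]
  · rw [P6, trg_zero]
  · rw [P7, trg_zero]
  · rw [P8, trg_zero]

end GCT
end
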